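/- arXiv:1908.05083 — 2 statements merged into one kernel-verified Lean document; each statement's English description precedes it below -/
import Mathlib

section
/- Let r > 0 and H₊ := { v ∈ ℝ^{p+q} : ⟨v,v⟩ = −r² and v^p + v^{p+1} > 0 }. For every x ∈ H₊, the AN-orbit of x equals H₊; in other words, H₊ is a single AN-orbit. -/
open Matrix

noncomputable section

/-- 1-based standard basis vector `e i` of `ℝ^n` (zero if `i` is out of range). -/
def stdE (n i : ℕ) : Fin n → ℝ := fun j => if (j : ℕ) + 1 = i then 1 else 0

/-- `w i := e_{p-i+1} - e_{p+i}`. -/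
def wVec (p q i : ℕ) : Fin (p + q) → ℝ := stdE (p + q) (p - i + 1) - stdE (p + q) (p + i)

/-- `v i := e_{p-i+1} + e_{p+i}`. -/
def vVec (p q i : ℕ) : Fin (p + q) → ℝ := stdE (p + q) (p - i + 1) + stdE (p + q) (p + i)

/-- The scalar product of signature `(p,q)` on `ℝ^{p+q}`. -/
def ip (p q : ℕ) (x y : Fin (p + q) → ℝ) : ℝ :=
  ∑ i : Fin (p + q), (if (i : ℕ) < p then (1 : ℝ) else -1) * x i * y i

/-- The matrix `J = diag(I_p, -I_q)`. -/
def Jmat (p q : ℕ) : Matrix (Fin (p + q)) (Fin (p + q)) ℝ :=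
  Matrix.diagonal (fun i => if (i : ℕ) < p then (1 : ℝ) else -1)

/-- Entry of a square matrix, with 1-based indices (0 outside the range). -/
def ent {n : ℕ} (X : Matrix (Fin n) (Fin n) ℝ) (i j : ℕ) : ℝ :=
  if h : i - 1 < n ∧ j - 1 < n then X ⟨i - 1, h.1⟩ ⟨j - 1, h.2⟩ else 0

/-- Coordinate of a vector, with 1-based index (0 outside the range). -/
def vent {n : ℕ} (x : Fin n → ℝ) (i : ℕ) : ℝ :=
  if h : i - 1 < n then x ⟨i - 1, h⟩ else 0

lemma ent_zero {n : ℕ} (i j : ℕ) : ent (0 : Matrix (Fin n) (Fin n) ℝ) i j = 0 := by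
  unfold ent; split <;> simp

lemma ent_add {n : ℕ} (X Y : Matrix (Fin n) (Fin n) ℝ) (i j : ℕ) :
    ent (X + Y) i j = ent X i j + ent Y i j := by
  unfold ent; split <;> simp [Matrix.add_apply]

lemma ent_smul {n : ℕ} (c : ℝ) (X : Matrix (Fin n) (Fin n) ℝ) (i j : ℕ) :
    ent (c • X) i j = c * ent X i j := by
  unfold ent; split <;> simp [Matrix.smul_apply]

/-- The Lie algebra `𝔰𝔬(p,q)`, as a set of matrices. -/
def soSet (p q : ℕ) : Set (Matrix (Fin (p + q)) (Fin (p + q)) ℝ) :=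
  {X | Xᵀ * Jmat p q + Jmat p q * X = 0}

lemma soSet_zero (p q : ℕ) : (0 : Matrix (Fin (p + q)) (Fin (p + q)) ℝ) ∈ soSet p q := by
  simp [soSet]

lemma soSet_add (p q : ℕ) {X Y : Matrix (Fin (p + q)) (Fin (p + q)) ℝ}
    (hX : X ∈ soSet p q) (hY : Y ∈ soSet p q) : X + Y ∈ soSet p q := by
  simp only [soSet, Set.mem_setOf_eq] at *
  rw [Matrix.transpose_add, Matrix.add_mul, Matrix.mul_add,
    show Xᵀ * Jmat p q + Yᵀ * Jmat p q + (Jmat p q * X + Jmat p q * Y)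
      = (Xᵀ * Jmat p q + Jmat p q * X) + (Yᵀ * Jmat p q + Jmat p q * Y) by abel,
    hX, hY, add_zero]

lemma soSet_smul (p q : ℕ) (c : ℝ) {X : Matrix (Fin (p + q)) (Fin (p + q)) ℝ}
    (hX : X ∈ soSet p q) : c • X ∈ soSet p q := by
  simp only [soSet, Set.mem_setOf_eq] at *
  rw [Matrix.transpose_smul, Matrix.smul_mul, Matrix.mul_smul, ← smul_add, hX, smul_zero]

/-- The set `𝔭` of symmetric elements of `𝔰𝔬(p,q)` (Cartan decomposition). -/
def pSet (p q : ℕ) : Set (Matrix (Fin (p + q)) (Fin (p + q)) ℝ) :=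
  {X | X ∈ soSet p q ∧ Xᵀ = X}

/-- The nilpotent Iwasawa factor `𝔫`, as a set of matrices; the conditions are the
entry conditions on the blocks `A`, `B`, `D` (1-based indices; `A i j = ent X i j`,
`B i l = ent X i (p + l)`, `D i j = ent X (p + i) (p + j)`). -/
def nSet (p q : ℕ) : Set (Matrix (Fin (p + q)) (Fin (p + q)) ℝ) :=
  {X | X ∈ soSet p q ∧
    (∀ i j, 1 ≤ i → i ≤ p - q → 1 ≤ j → j ≤ p - q → ent X i j = 0) ∧
    (∀ l, 1 ≤ l → l ≤ q → ent X (p - l + 1) (p + l) = 0) ∧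
    (∀ k l, 1 ≤ k → k ≤ p - q → 1 ≤ l → l ≤ q →
      ent X k (p - l + 1) = ent X k (p + l)) ∧
    (∀ i j, 1 ≤ i → i < j → j ≤ q →
      ent X (p + 1 - j) (p + 1 - i) = ent X (p + 1 - j) (p + i)) ∧
    (∀ i j, 1 ≤ i → i < j → j ≤ q →
      ent X (p + i) (p + j) = - ent X (p + 1 - i) (p + j))}

/-- The abelian factor `𝔞`, as a set of matrices: all entries vanish except the
pairs in positions `(p-l+1, p+l)` and `(p+l, p-l+1)`, `1 ≤ l ≤ q`, which are equal. -/
def aSet (p q : ℕ) : Set (Matrix (Fin (p + q)) (Fin (p + q)) ℝ) :=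
  {X | (∀ l, 1 ≤ l → l ≤ q → ent X (p - l + 1) (p + l) = ent X (p + l) (p - l + 1)) ∧
    (∀ i j, 1 ≤ i → i ≤ p + q → 1 ≤ j → j ≤ p + q →
      (¬ ∃ l, 1 ≤ l ∧ l ≤ q ∧ ((i = p - l + 1 ∧ j = p + l) ∨ (i = p + l ∧ j = p - l + 1))) →
      ent X i j = 0)}

/-- `𝔨₀`: skew-symmetric upper-left `(p-q)×(p-q)` block, all other entries zero. -/
def kSet (p q : ℕ) : Set (Matrix (Fin (p + q)) (Fin (p + q)) ℝ) :=
  {X | (∀ i j, 1 ≤ i → i ≤ p - q → 1 ≤ j → j ≤ p - q → ent X i j = - ent X j i) ∧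
    (∀ i j, 1 ≤ i → i ≤ p + q → 1 ≤ j → j ≤ p + q →
      ¬(i ≤ p - q ∧ j ≤ p - q) → ent X i j = 0)}

/-- The nilpotent Iwasawa factor `𝔫` as an `ℝ`-subspace of `M_{p+q}(ℝ)`. -/
def nSub (p q : ℕ) : Submodule ℝ (Matrix (Fin (p + q)) (Fin (p + q)) ℝ) where
  carrier := nSet p q
  zero_mem' := by
    refine ⟨soSet_zero p q, ?_, ?_, ?_, ?_, ?_⟩ <;> intros <;> simp [ent_zero]
  add_mem' := by
    rintro X Y ⟨h0, h1, h2, h3, h4, h5⟩ ⟨g0, g1, g2, g3, g4, g5⟩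
    refine ⟨soSet_add p q h0 g0, ?_, ?_, ?_, ?_, ?_⟩
    · intro i j hi hi' hj hj'
      rw [ent_add, h1 i j hi hi' hj hj', g1 i j hi hi' hj hj', add_zero]
    · intro l hl hl'
      rw [ent_add, h2 l hl hl', g2 l hl hl', add_zero]
    · intro k l hk hk' hl hl'
      rw [ent_add, ent_add, h3 k l hk hk' hl hl', g3 k l hk hk' hl hl']
    · intro i j hi hij hj
      rw [ent_add, ent_add, h4 i j hi hij hj, g4 i j hi hij hj]
    · intro i j hi hij hj
      rw [ent_add, ent_add, h5 i j hi hij hj, g5 i j hi hij hj]; ring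
  smul_mem' := by
    rintro c X ⟨h0, h1, h2, h3, h4, h5⟩
    refine ⟨soSet_smul p q c h0, ?_, ?_, ?_, ?_, ?_⟩
    · intro i j hi hi' hj hj'
      rw [ent_smul, h1 i j hi hi' hj hj', mul_zero]
    · intro l hl hl'
      rw [ent_smul, h2 l hl hl', mul_zero]
    · intro k l hk hk' hl hl'
      rw [ent_smul, ent_smul, h3 k l hk hk' hl hl']
    · intro i j hi hij hj
      rw [ent_smul, ent_smul, h4 i j hi hij hj]
    · intro i j hi hij hj
      rw [ent_smul, ent_smul, h5 i j hi hij hj]; ring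

/-- The abelian factor `𝔞` as an `ℝ`-subspace of `M_{p+q}(ℝ)`. -/
def aSub (p q : ℕ) : Submodule ℝ (Matrix (Fin (p + q)) (Fin (p + q)) ℝ) where
  carrier := aSet p q
  zero_mem' := by
    refine ⟨?_, ?_⟩ <;> intros <;> simp [ent_zero]
  add_mem' := by
    rintro X Y ⟨h1, h2⟩ ⟨g1, g2⟩
    refine ⟨?_, ?_⟩
    · intro l hl hl'
      rw [ent_add, ent_add, h1 l hl hl', g1 l hl hl']
    · intro i j hi hi' hj hj' hne
      rw [ent_add, h2 i j hi hi' hj hj' hne, g2 i j hi hi' hj hj' hne, add_zero]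
  smul_mem' := by
    rintro c X ⟨h1, h2⟩
    refine ⟨?_, ?_⟩
    · intro l hl hl'
      rw [ent_smul, ent_smul, h1 l hl hl']
    · intro i j hi hi' hj hj' hne
      rw [ent_smul, h2 i j hi hi' hj hj' hne, mul_zero]

/-- `𝔨₀` as an `ℝ`-subspace of `M_{p+q}(ℝ)`. -/
def kSub (p q : ℕ) : Submodule ℝ (Matrix (Fin (p + q)) (Fin (p + q)) ℝ) where
  carrier := kSet p q
  zero_mem' := by
    refine ⟨?_, ?_⟩ <;> intros <;> simp [ent_zero]
  add_mem' := by
    rintro X Y ⟨h1, h2⟩ ⟨g1, g2⟩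
    refine ⟨?_, ?_⟩
    · intro i j hi hi' hj hj'
      rw [ent_add, ent_add, h1 i j hi hi' hj hj', g1 i j hi hi' hj hj']; ring
    · intro i j hi hi' hj hj' hne
      rw [ent_add, h2 i j hi hi' hj hj' hne, g2 i j hi hi' hj hj' hne, add_zero]
  smul_mem' := by
    rintro c X ⟨h1, h2⟩
    refine ⟨?_, ?_⟩
    · intro i j hi hi' hj hj'
      rw [ent_smul, ent_smul, h1 i j hi hi' hj hj']; ring
    · intro i j hi hi' hj hj' hne
      rw [ent_smul, h2 i j hi hi' hj hj' hne, mul_zero]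

/-- The subspace `{X ∈ M_n(ℝ) : X x = 0}`. -/
def kerAt {n : ℕ} (x : Fin n → ℝ) : Submodule ℝ (Matrix (Fin n) (Fin n) ℝ) where
  carrier := {X | X *ᵥ x = 0}
  zero_mem' := by simp [Matrix.zero_mulVec]
  add_mem' := by
    intro X Y hX hY
    simp only [Set.mem_setOf_eq] at *
    rw [Matrix.add_mulVec, hX, hY, add_zero]
  smul_mem' := by
    intro c X hX
    simp only [Set.mem_setOf_eq] at *
    rw [Matrix.smul_mulVec, hX, smul_zero]

/-- The exponential of a matrix, as a unit of `M_n(ℝ)`, i.e. an element of `GL(n, ℝ)`. -/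
def expUnit {n : ℕ} (X : Matrix (Fin n) (Fin n) ℝ) : (Matrix (Fin n) (Fin n) ℝ)ˣ where
  val := NormedSpace.exp X
  inv := NormedSpace.exp (-X)
  val_inv := by
    rw [← Matrix.exp_add_of_commute X (-X) (Commute.neg_right (Commute.refl X)),
      add_neg_cancel, NormedSpace.exp_zero]
  inv_val := by
    rw [← Matrix.exp_add_of_commute (-X) X (Commute.neg_left (Commute.refl X)),
      neg_add_cancel, NormedSpace.exp_zero]

/-- The subgroup `N = exp(𝔫)` of `GL(p+q, ℝ)` generated by exponentials of elements of `𝔫`. -/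
def Ngrp (p q : ℕ) : Subgroup (Matrix (Fin (p + q)) (Fin (p + q)) ℝ)ˣ :=
  Subgroup.closure {g | ∃ X ∈ nSet p q, g = expUnit X}

/-- The subgroup `AN` of `GL(p+q, ℝ)` generated by exponentials of elements of `𝔞 ∪ 𝔫`. -/
def ANgrp (p q : ℕ) : Subgroup (Matrix (Fin (p + q)) (Fin (p + q)) ℝ)ˣ :=
  Subgroup.closure {g | ∃ X ∈ aSet p q ∪ nSet p q, g = expUnit X}

/-- The subgroup `Q = K₀AN` of `GL(p+q, ℝ)` generated by exponentials of `𝔨₀ ∪ 𝔞 ∪ 𝔫`. -/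
def Qgrp (p q : ℕ) : Subgroup (Matrix (Fin (p + q)) (Fin (p + q)) ℝ)ˣ :=
  Subgroup.closure {g | ∃ X ∈ kSet p q ∪ aSet p q ∪ nSet p q, g = expUnit X}

/-- The orbit `G(x)` of a point `x ∈ ℝ^n` under a subgroup `G` of `GL(n, ℝ)`. -/
def orb {n : ℕ} (G : Subgroup (Matrix (Fin n) (Fin n) ℝ)ˣ) (x : Fin n → ℝ) :
    Set (Fin n → ℝ) :=
  {v | ∃ g ∈ G, (g : Matrix (Fin n) (Fin n) ℝ) *ᵥ x = v}

end
namespace ANwork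
open Matrix

noncomputable section

lemma exp_mulVec {n : ℕ} (M : Matrix (Fin n) (Fin n) ℝ) (v : Fin n → ℝ) :
    NormedSpace.exp M *ᵥ v = ∑' k : ℕ, ((k.factorial : ℝ))⁻¹ • (M ^ k *ᵥ v) := by
  letI : SeminormedRing (Matrix (Fin n) (Fin n) ℝ) := Matrix.linftyOpSemiNormedRing
  letI : NormedRing (Matrix (Fin n) (Fin n) ℝ) := Matrix.linftyOpNormedRing
  letI : NormedAlgebra ℝ (Matrix (Fin n) (Fin n) ℝ) := Matrix.linftyOpNormedAlgebra
  have hsum : Summable (fun k : ℕ => ((k.factorial : ℝ))⁻¹ • M ^ k) :=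
    NormedSpace.expSeries_summable' M
  let L : Matrix (Fin n) (Fin n) ℝ →ₗ[ℝ] (Fin n → ℝ) :=
    { toFun := fun A => A *ᵥ v
      map_add' := fun A B => Matrix.add_mulVec A B v
      map_smul' := fun c A => Matrix.smul_mulVec c A v }
  let L' : Matrix (Fin n) (Fin n) ℝ →L[ℝ] (Fin n → ℝ) := LinearMap.toContinuousLinearMap L
  have h1 : NormedSpace.exp M *ᵥ v = L' (NormedSpace.exp M) := rfl
  rw [h1, NormedSpace.exp_eq_tsum ℝ, L'.map_tsum hsum]
  refine tsum_congr fun k => ?_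
  show L' _ = _
  rw [_root_.map_smul L']
  rfl

lemma exp_mulVec_eigen {n : ℕ} (M : Matrix (Fin n) (Fin n) ℝ) (v : Fin n → ℝ) (c : ℝ)
    (h : M *ᵥ v = c • v) :
    NormedSpace.exp M *ᵥ v = Real.exp c • v := by
  have hpow : ∀ k : ℕ, M ^ k *ᵥ v = c ^ k • v := by
    intro k; induction k with
    | zero => simp
    | succ k ih =>
      rw [pow_succ, ← Matrix.mulVec_mulVec, h, Matrix.mulVec_smul, ih, smul_smul, pow_succ]
      ring_nf
  rw [exp_mulVec]
  have hs : Summable (fun k : ℕ => ((k.factorial : ℝ))⁻¹ * c ^ k) := by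
    simpa [smul_eq_mul] using NormedSpace.expSeries_summable' (𝕂 := ℝ) (𝔸 := ℝ) c
  calc ∑' k : ℕ, ((k.factorial : ℝ))⁻¹ • (M ^ k *ᵥ v)
      = ∑' k : ℕ, (((k.factorial : ℝ))⁻¹ * c ^ k) • v := by
        refine tsum_congr fun k => ?_; rw [hpow, smul_smul]
    _ = (∑' k : ℕ, ((k.factorial : ℝ))⁻¹ * c ^ k) • v := hs.tsum_smul_const v
    _ = Real.exp c • v := by
        congr 1
        rw [Real.exp_eq_exp_ℝ, NormedSpace.exp_eq_tsum ℝ]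
        simp [smul_eq_mul]

lemma exp_mulVec_nilp {n : ℕ} (M : Matrix (Fin n) (Fin n) ℝ) (v : Fin n → ℝ)
    (h3 : M *ᵥ (M *ᵥ (M *ᵥ v)) = 0) :
    NormedSpace.exp M *ᵥ v = v + M *ᵥ v + (2 : ℝ)⁻¹ • (M *ᵥ (M *ᵥ v)) := by
  have key : ∀ k : ℕ, M ^ (k + 3) *ᵥ v = 0 := by
    intro k; induction k with
    | zero =>
      show M ^ 3 *ᵥ v = 0
      rw [show (3 : ℕ) = 2 + 1 from rfl, pow_succ, pow_two, Matrix.mul_assoc,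
        ← Matrix.mulVec_mulVec, ← Matrix.mulVec_mulVec, h3]
    | succ k ih =>
      rw [show k + 1 + 3 = (k + 3) + 1 from rfl, pow_succ', ← Matrix.mulVec_mulVec, ih,
        Matrix.mulVec_zero]
  rw [exp_mulVec, tsum_eq_sum (s := Finset.range 3) ?side]
  case side =>
    intro k hk
    simp only [Finset.mem_range, not_lt] at hk
    have := key (k - 3)
    rw [show k - 3 + 3 = k from by omega] at this
    rw [this, smul_zero]
  rw [Finset.sum_range_succ, Finset.sum_range_succ, Finset.sum_range_succ, Finset.sum_range_zero]
  rw [pow_zero, pow_one, pow_two, ← Matrix.mulVec_mulVec, Matrix.one_mulVec]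
  norm_num [Nat.factorial]

section
variable (p q : ℕ)

def epsF (p q : ℕ) : Fin (p + q) → ℝ := fun j => if (j : ℕ) < p then 1 else -1
def wvF (p q : ℕ) : Fin (p + q) → ℝ :=
  fun j => if (j : ℕ) = p - 1 then 1 else if (j : ℕ) = p then -1 else 0
def vbF (p q : ℕ) : Fin (p + q) → ℝ :=
  fun j => if (j : ℕ) = p - 1 then 1 else if (j : ℕ) = p then 1 else 0
def MM (p q : ℕ) (u : Fin (p + q) → ℝ) : Matrix (Fin (p + q)) (Fin (p + q)) ℝ :=
  fun k j => vbF p q j * u k - epsF p q j * u j * wvF p q k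
def HH (p q : ℕ) : Matrix (Fin (p + q)) (Fin (p + q)) ℝ :=
  fun k j => (vbF p q k * vbF p q j - wvF p q k * wvF p q j) / 2

-- bilinearity of ip
lemma ip_add_left (x y z : Fin (p+q) → ℝ) :
    ip p q (x + y) z = ip p q x z + ip p q y z := by
  simp only [ip, ← Finset.sum_add_distrib, Pi.add_apply]
  exact Finset.sum_congr rfl fun i _ => by ring

lemma ip_smul_left (c : ℝ) (x z : Fin (p+q) → ℝ) :
    ip p q (c • x) z = c * ip p q x z := by
  simp only [ip, Finset.mul_sum, Pi.smul_apply, smul_eq_mul]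
  exact Finset.sum_congr rfl fun i _ => by ring

lemma ip_comm (x y : Fin (p+q) → ℝ) : ip p q x y = ip p q y x :=
  Finset.sum_congr rfl fun i _ => by ring

lemma ip_add_right (x y z : Fin (p+q) → ℝ) :
    ip p q z (x + y) = ip p q z x + ip p q z y := by
  rw [ip_comm, ip_add_left, ip_comm p q x z, ip_comm p q y z]

lemma ip_smul_right (c : ℝ) (x z : Fin (p+q) → ℝ) :
    ip p q z (c • x) = c * ip p q z x := by
  rw [ip_comm, ip_smul_left, ip_comm p q x z]

lemma ip_sub_left (x y z : Fin (p+q) → ℝ) :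
    ip p q (x - y) z = ip p q x z - ip p q y z := by
  have h0 : x - y + y = x := by abel
  have h := ip_add_left p q (x - y) y z
  rw [h0] at h; linarith

lemma ip_sub_right (x y z : Fin (p+q) → ℝ) :
    ip p q z (x - y) = ip p q z x - ip p q z y := by
  rw [ip_comm, ip_sub_left, ip_comm p q x z, ip_comm p q y z]

lemma sum_ite_coe {n : ℕ} (c : ℕ) (hc : c < n) (f : Fin n → ℝ) :
    (∑ j : Fin n, if (j : ℕ) = c then f j else 0) = f ⟨c, hc⟩ := by
  rw [Finset.sum_eq_single (⟨c, hc⟩ : Fin n)]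
  · simp
  · intro b _ hb
    rw [if_neg]; intro h; exact hb (Fin.ext h)
  · intro h; exact absurd (Finset.mem_univ _) h

variable (hq : 1 ≤ q) (hpq : q ≤ p)
include hq hpq

lemma hb1 : p - 1 < p + q := by omega
lemma hb2 : p < p + q := by omega

lemma wv_at1 : wvF p q ⟨p - 1, hb1 p q hq hpq⟩ = 1 := by simp [wvF]
lemma wv_at2 : wvF p q ⟨p, hb2 p q hq hpq⟩ = -1 := by
  have e : ((⟨p, hb2 p q hq hpq⟩ : Fin (p+q)) : ℕ) = p := rfl
  simp only [wvF, e]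
  rw [if_neg (by omega)]; simp
lemma vb_at1 : vbF p q ⟨p - 1, hb1 p q hq hpq⟩ = 1 := by simp [vbF]
lemma vb_at2 : vbF p q ⟨p, hb2 p q hq hpq⟩ = 1 := by
  have e : ((⟨p, hb2 p q hq hpq⟩ : Fin (p+q)) : ℕ) = p := rfl
  simp only [vbF, e]
  rw [if_neg (by omega)]; simp

lemma eps_mul_wv (i : Fin (p + q)) : epsF p q i * wvF p q i = vbF p q i := by
  simp only [epsF, wvF, vbF]
  split_ifs <;> first | ring1 | (exfalso; omega)

lemma sum_vb_mul (y : Fin (p+q) → ℝ) :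
    (∑ j : Fin (p+q), vbF p q j * y j)
      = y ⟨p - 1, hb1 p q hq hpq⟩ + y ⟨p, hb2 p q hq hpq⟩ := by
  have h0 : ∀ j : Fin (p+q), vbF p q j * y j
      = (if (j : ℕ) = p - 1 then y j else 0) + (if (j : ℕ) = p then y j else 0) := by
    intro j; simp only [vbF]
    split_ifs <;> first | ring1 | (exfalso; omega)
  rw [Finset.sum_congr rfl fun j _ => h0 j, Finset.sum_add_distrib,
    sum_ite_coe _ (hb1 p q hq hpq), sum_ite_coe _ (hb2 p q hq hpq)]

lemma sum_wv_mul (y : Fin (p+q) → ℝ) :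
    (∑ j : Fin (p+q), wvF p q j * y j)
      = y ⟨p - 1, hb1 p q hq hpq⟩ - y ⟨p, hb2 p q hq hpq⟩ := by
  have h0 : ∀ j : Fin (p+q), wvF p q j * y j
      = (if (j : ℕ) = p - 1 then y j else 0) + (if (j : ℕ) = p then -y j else 0) := by
    intro j; simp only [wvF]
    split_ifs <;> first | ring1 | (exfalso; omega)
  rw [Finset.sum_congr rfl fun j _ => h0 j, Finset.sum_add_distrib,
    sum_ite_coe _ (hb1 p q hq hpq), sum_ite_coe _ (hb2 p q hq hpq)]
  ring

lemma ip_wv (y : Fin (p+q) → ℝ) :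
    ip p q y (wvF p q) = y ⟨p - 1, hb1 p q hq hpq⟩ + y ⟨p, hb2 p q hq hpq⟩ := by
  have h0 : ∀ j : Fin (p+q), (if (j : ℕ) < p then (1:ℝ) else -1) * y j * wvF p q j
      = (if (j : ℕ) = p - 1 then y j else 0) + (if (j : ℕ) = p then y j else 0) := by
    intro j; simp only [wvF]
    split_ifs <;> first | ring1 | (exfalso; omega)
  rw [ip, Finset.sum_congr rfl fun j _ => h0 j, Finset.sum_add_distrib,
    sum_ite_coe _ (hb1 p q hq hpq), sum_ite_coe _ (hb2 p q hq hpq)]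

lemma ip_vb (y : Fin (p+q) → ℝ) :
    ip p q y (vbF p q) = y ⟨p - 1, hb1 p q hq hpq⟩ - y ⟨p, hb2 p q hq hpq⟩ := by
  have h0 : ∀ j : Fin (p+q), (if (j : ℕ) < p then (1:ℝ) else -1) * y j * vbF p q j
      = (if (j : ℕ) = p - 1 then y j else 0) + (if (j : ℕ) = p then -y j else 0) := by
    intro j; simp only [vbF]
    split_ifs <;> first | ring1 | (exfalso; omega)
  rw [ip, Finset.sum_congr rfl fun j _ => h0 j, Finset.sum_add_distrib,
    sum_ite_coe _ (hb1 p q hq hpq), sum_ite_coe _ (hb2 p q hq hpq)]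
  ring

lemma ip_wv_wv : ip p q (wvF p q) (wvF p q) = 0 := by
  rw [ip_wv p q hq hpq, wv_at1 p q hq hpq, wv_at2 p q hq hpq]; ring
lemma ip_vb_vb : ip p q (vbF p q) (vbF p q) = 0 := by
  rw [ip_vb p q hq hpq, vb_at1 p q hq hpq, vb_at2 p q hq hpq]; ring
lemma ip_vb_wv : ip p q (vbF p q) (wvF p q) = 2 := by
  rw [ip_wv p q hq hpq, vb_at1 p q hq hpq, vb_at2 p q hq hpq]; ring
lemma ip_wv_vb : ip p q (wvF p q) (vbF p q) = 2 := by
  rw [ip_vb p q hq hpq, wv_at1 p q hq hpq, wv_at2 p q hq hpq]; ring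

lemma MM_mulVec (u y : Fin (p+q) → ℝ) :
    MM p q u *ᵥ y = ip p q y (wvF p q) • u - ip p q u y • wvF p q := by
  funext k
  have e1 : ∀ j : Fin (p+q), MM p q u k j * y j
      = u k * (vbF p q j * y j) - wvF p q k * ((if (j:ℕ) < p then (1:ℝ) else -1) * u j * y j) := by
    intro j; simp only [MM, epsF]; ring
  simp only [Matrix.mulVec, dotProduct]
  rw [Finset.sum_congr rfl fun j _ => e1 j, Finset.sum_sub_distrib, ← Finset.mul_sum,
    ← Finset.mul_sum, sum_vb_mul p q hq hpq]
  show _ = ip p q y (wvF p q) * u k - ip p q u y * wvF p q k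
  rw [ip_wv p q hq hpq]
  show u k * _ - wvF p q k * ip p q u y = _
  ring

lemma HH_mulVec (y : Fin (p+q) → ℝ) :
    HH p q *ᵥ y = (2:ℝ)⁻¹ • (ip p q y (wvF p q) • vbF p q - ip p q y (vbF p q) • wvF p q) := by
  funext k
  have e1 : ∀ j : Fin (p+q), HH p q k j * y j
      = (vbF p q k * (vbF p q j * y j) - wvF p q k * (wvF p q j * y j)) / 2 := by
    intro j; simp only [HH]; ring
  simp only [Matrix.mulVec, dotProduct]
  rw [Finset.sum_congr rfl fun j _ => e1 j]
  rw [← Finset.sum_div, Finset.sum_sub_distrib, ← Finset.mul_sum, ← Finset.mul_sum,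
    sum_vb_mul p q hq hpq, sum_wv_mul p q hq hpq]
  show _ = (2:ℝ)⁻¹ * (ip p q y (wvF p q) * vbF p q k - ip p q y (vbF p q) * wvF p q k)
  rw [ip_wv p q hq hpq, ip_vb p q hq hpq]
  ring

lemma HH_mulVec_vb : HH p q *ᵥ vbF p q = vbF p q := by
  rw [HH_mulVec p q hq hpq, ip_vb_wv p q hq hpq, ip_vb_vb p q hq hpq]
  funext k; simp

lemma HH_mulVec_wv : HH p q *ᵥ wvF p q = -wvF p q := by
  rw [HH_mulVec p q hq hpq, ip_wv_wv p q hq hpq, ip_wv_vb p q hq hpq]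
  funext k; simp

end
end
end ANwork
namespace ANwork
section
open Matrix
variable (p q : ℕ)

lemma ent_eq {n : ℕ} (X : Matrix (Fin n) (Fin n) ℝ) (a b : ℕ) (ha : a - 1 < n) (hb : b - 1 < n) :
    ent X a b = X ⟨a - 1, ha⟩ ⟨b - 1, hb⟩ := dif_pos ⟨ha, hb⟩

lemma ent_eq_fin {n : ℕ} (X : Matrix (Fin n) (Fin n) ℝ) (k l : Fin n) :
    ent X ((k : ℕ) + 1) ((l : ℕ) + 1) = X k l := by
  rw [ent_eq X _ _ (by omega) (by omega)]
  congr 1 <;> exact Fin.ext (by omega)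

lemma mem_soSet_iff (X : Matrix (Fin (p+q)) (Fin (p+q)) ℝ) :
    X ∈ soSet p q ↔ ∀ i j : Fin (p+q), X j i * epsF p q j + epsF p q i * X i j = 0 := by
  rw [soSet, Set.mem_setOf_eq, ← Matrix.ext_iff]
  constructor
  · intro h i j
    have := h i j
    simpa [Matrix.add_apply, Jmat, Matrix.mul_diagonal, Matrix.diagonal_mul,
      Matrix.transpose_apply, epsF] using this
  · intro h i j
    have := h i j
    simpa [Matrix.add_apply, Jmat, Matrix.mul_diagonal, Matrix.diagonal_mul,
      Matrix.transpose_apply, epsF] using this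

variable (hq : 1 ≤ q) (hpq : q ≤ p)
include hq hpq

lemma MM_mem_soSet (u : Fin (p+q) → ℝ) : MM p q u ∈ soSet p q := by
  rw [mem_soSet_iff]
  intro i j
  have h1 := eps_mul_wv p q hq hpq i
  have h2 := eps_mul_wv p q hq hpq j
  simp only [MM]
  linear_combination (-(epsF p q i * u i)) * h2 + (-(epsF p q j * u j)) * h1

lemma cv_vb (c : ℕ) (hc1 : 1 ≤ c) (hc : c - 1 < p + q) :
    vbF p q ⟨c - 1, hc⟩ = if c = p then 1 else if c = p + 1 then 1 else 0 := by
  have e : ((⟨c - 1, hc⟩ : Fin (p+q)) : ℕ) = c - 1 := rfl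
  simp only [vbF, e]
  split_ifs <;> first | rfl | (exfalso; omega)

lemma cv_wv (c : ℕ) (hc1 : 1 ≤ c) (hc : c - 1 < p + q) :
    wvF p q ⟨c - 1, hc⟩ = if c = p then 1 else if c = p + 1 then -1 else 0 := by
  have e : ((⟨c - 1, hc⟩ : Fin (p+q)) : ℕ) = c - 1 := rfl
  simp only [wvF, e]
  split_ifs <;> first | rfl | (exfalso; omega)

lemma cv_eps (c : ℕ) (hc1 : 1 ≤ c) (hc : c - 1 < p + q) :
    epsF p q ⟨c - 1, hc⟩ = if c ≤ p then 1 else -1 := by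
  have e : ((⟨c - 1, hc⟩ : Fin (p+q)) : ℕ) = c - 1 := rfl
  simp only [epsF, e]
  split_ifs <;> first | rfl | (exfalso; omega)

lemma ent_MM (u : Fin (p+q) → ℝ) (a b : ℕ) (ha1 : 1 ≤ a) (ha2 : a ≤ p + q)
    (hb1 : 1 ≤ b) (hb2 : b ≤ p + q) :
    ent (MM p q u) a b =
      (if b = p then 1 else if b = p + 1 then 1 else 0) * u ⟨a - 1, by omega⟩
        - (if b ≤ p then (1:ℝ) else -1) * u ⟨b - 1, by omega⟩
          * (if a = p then 1 else if a = p + 1 then -1 else 0) := by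
  rw [ent_eq _ a b (by omega) (by omega)]
  show vbF p q _ * u _ - epsF p q _ * u _ * wvF p q _ = _
  rw [cv_vb p q hq hpq b hb1 (by omega), cv_eps p q hq hpq b hb1 (by omega),
    cv_wv p q hq hpq a ha1 (by omega)]

lemma ent_HH (a b : ℕ) (ha1 : 1 ≤ a) (ha2 : a ≤ p + q) (hb1 : 1 ≤ b) (hb2 : b ≤ p + q) :
    ent (HH p q) a b =
      ((if a = p then 1 else if a = p + 1 then (1:ℝ) else 0)
          * (if b = p then 1 else if b = p + 1 then 1 else 0)
        - (if a = p then 1 else if a = p + 1 then (-1:ℝ) else 0)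
          * (if b = p then 1 else if b = p + 1 then -1 else 0)) / 2 := by
  rw [ent_eq _ a b (by omega) (by omega)]
  show (vbF p q _ * vbF p q _ - wvF p q _ * wvF p q _) / 2 = _
  rw [cv_vb p q hq hpq b hb1 (by omega), cv_vb p q hq hpq a ha1 (by omega),
    cv_wv p q hq hpq a ha1 (by omega), cv_wv p q hq hpq b hb1 (by omega)]

end
end ANwork
namespace ANwork
section
set_option maxHeartbeats 1000000
open Matrix
variable (p q : ℕ) (hq : 1 ≤ q) (hpq : q ≤ p)
include hq hpq

lemma MM_mem_nSet (u : Fin (p+q) → ℝ)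
    (hu1 : ∀ j : Fin (p+q), (j : ℕ) = p - 1 → u j = 0)
    (hu2 : ∀ j : Fin (p+q), (j : ℕ) = p → u j = 0) :
    MM p q u ∈ nSet p q := by
  refine ⟨MM_mem_soSet p q hq hpq u, ?_, ?_, ?_, ?_, ?_⟩
  · -- C1 : i,j ≤ p - q
    intro i j hi1 hi2 hj1 hj2
    rw [ent_MM p q hq hpq u i j hi1 (by omega) hj1 (by omega)]
    split_ifs <;> first | ring1 | (exfalso; omega)
  · -- C2 : ent X (p-l+1) (p+l) = 0
    intro l hl1 hl2
    rw [ent_MM p q hq hpq u (p - l + 1) (p + l) (by omega) (by omega) (by omega) (by omega)]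
    by_cases hl : l = 1
    · rw [hu1 ⟨p - l + 1 - 1, by omega⟩ (show p - l + 1 - 1 = p - 1 by omega),
        hu2 ⟨p + l - 1, by omega⟩ (show p + l - 1 = p by omega)]
      split_ifs <;> ring1
    · split_ifs <;> first | ring1 | (exfalso; omega)
  · -- C3
    intro k l hk1 hk2 hl1 hl2
    rw [ent_MM p q hq hpq u k (p - l + 1) hk1 (by omega) (by omega) (by omega),
      ent_MM p q hq hpq u k (p + l) hk1 (by omega) (by omega) (by omega)]
    split_ifs <;> first | ring1 | (exfalso; omega)
  · -- C4
    intro i j hi1 hij hj2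
    rw [ent_MM p q hq hpq u (p + 1 - j) (p + 1 - i) (by omega) (by omega) (by omega) (by omega),
      ent_MM p q hq hpq u (p + 1 - j) (p + i) (by omega) (by omega) (by omega) (by omega)]
    split_ifs <;> first | ring1 | (exfalso; omega)
  · -- C5
    intro i j hi1 hij hj2
    rw [ent_MM p q hq hpq u (p + i) (p + j) (by omega) (by omega) (by omega) (by omega),
      ent_MM p q hq hpq u (p + 1 - i) (p + j) (by omega) (by omega) (by omega) (by omega)]
    split_ifs <;> first | ring1 | (exfalso; omega)

lemma smulHH_mem_aSet (t : ℝ) : t • HH p q ∈ aSet p q := by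
  constructor
  · intro l hl1 hl2
    rw [ent_smul, ent_smul,
      ent_HH p q hq hpq (p - l + 1) (p + l) (by omega) (by omega) (by omega) (by omega),
      ent_HH p q hq hpq (p + l) (p - l + 1) (by omega) (by omega) (by omega) (by omega)]
    split_ifs <;> first | ring1 | (exfalso; omega)
  · intro i j hi1 hi2 hj1 hj2 hne
    rw [ent_smul, ent_HH p q hq hpq i j hi1 hi2 hj1 hj2]
    have hni : ¬(i = p ∧ j = p + 1) := fun ⟨h1, h2⟩ => hne ⟨1, by omega, hq, by omega⟩
    have hnj : ¬(i = p + 1 ∧ j = p) := fun ⟨h1, h2⟩ => hne ⟨1, by omega, hq, by omega⟩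
    split_ifs <;> first | ring1 | (exfalso; omega)

omit hq hpq in
lemma pattern_symm {i j : ℕ}
    (h : ∃ l, 1 ≤ l ∧ l ≤ q ∧ ((j = p - l + 1 ∧ i = p + l) ∨ (j = p + l ∧ i = p - l + 1))) :
    ∃ l, 1 ≤ l ∧ l ≤ q ∧ ((i = p - l + 1 ∧ j = p + l) ∨ (i = p + l ∧ j = p - l + 1)) := by
  obtain ⟨l, h1, h2, h3⟩ := h
  exact ⟨l, h1, h2, h3.elim (fun hh => Or.inr ⟨hh.2, hh.1⟩) (fun hh => Or.inl ⟨hh.2, hh.1⟩)⟩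

lemma aSet_sub_soSet (X : Matrix (Fin (p+q)) (Fin (p+q)) ℝ) (hX : X ∈ aSet p q) :
    X ∈ soSet p q := by
  obtain ⟨hsym, hzero⟩ := hX
  rw [mem_soSet_iff]
  intro i j
  have hi := i.isLt
  have hj := j.isLt
  by_cases h : ∃ l, 1 ≤ l ∧ l ≤ q ∧
      (((i:ℕ)+1 = p - l + 1 ∧ (j:ℕ)+1 = p + l) ∨ ((i:ℕ)+1 = p + l ∧ (j:ℕ)+1 = p - l + 1))
  · obtain ⟨l, hl1, hl2, hc⟩ := h
    have hs := hsym l hl1 hl2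
    rcases hc with ⟨hc1, hc2⟩ | ⟨hc1, hc2⟩
    · rw [show p - l + 1 = (i:ℕ)+1 by omega, show p + l = (j:ℕ)+1 by omega,
        ent_eq_fin, ent_eq_fin] at hs
      have e1 : epsF p q i = 1 := by simp only [epsF]; exact if_pos (by omega)
      have e2 : epsF p q j = -1 := by simp only [epsF]; exact if_neg (by omega)
      rw [e1, e2, hs]
      ring
    · rw [show p - l + 1 = (j:ℕ)+1 by omega, show p + l = (i:ℕ)+1 by omega,
        ent_eq_fin, ent_eq_fin] at hs
      have e1 : epsF p q j = 1 := by simp only [epsF]; exact if_pos (by omega)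
      have e2 : epsF p q i = -1 := by simp only [epsF]; exact if_neg (by omega)
      rw [e1, e2, hs]
      ring
  · have h' := fun hh => h (pattern_symm p q hh)
    have z1 := hzero ((i:ℕ)+1) ((j:ℕ)+1) (by omega) (by omega) (by omega) (by omega) h
    have z2 := hzero ((j:ℕ)+1) ((i:ℕ)+1) (by omega) (by omega) (by omega) (by omega) h'
    rw [ent_eq_fin] at z1 z2
    rw [z1, z2]
    ring

end
end ANwork
namespace ANwork
section
set_option maxHeartbeats 1000000
open Matrix
variable (p q : ℕ) (hq : 1 ≤ q) (hpq : q ≤ p)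

lemma ent_fin2 {n : ℕ} (X : Matrix (Fin n) (Fin n) ℝ) (k l : Fin n) (a b : ℕ)
    (ha : (k : ℕ) + 1 = a) (hb : (l : ℕ) + 1 = b) : ent X a b = X k l := by
  subst ha; subst hb; exact ent_eq_fin X k l

include hq hpq

lemma mulVec_wv_eq (X : Matrix (Fin (p+q)) (Fin (p+q)) ℝ) :
    X *ᵥ wvF p q = fun k => X k ⟨p - 1, hb1 p q hq hpq⟩ - X k ⟨p, hb2 p q hq hpq⟩ := by
  funext k
  show ∑ j : Fin (p+q), X k j * wvF p q j = _
  have e : ∀ j : Fin (p+q), X k j * wvF p q j = wvF p q j * X k j := fun j => by ring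
  rw [Finset.sum_congr rfl fun j _ => e j, sum_wv_mul p q hq hpq]

lemma nSet_mulVec_wv (X : Matrix (Fin (p+q)) (Fin (p+q)) ℝ) (hX : X ∈ nSet p q) :
    X *ᵥ wvF p q = 0 := by
  obtain ⟨hso, c1, c2, c3, c4, c5⟩ := hX
  have hsym := (mem_soSet_iff p q X).1 hso
  rw [mulVec_wv_eq p q hq hpq]
  funext k
  have hk := k.isLt
  have eL : ent X ((k:ℕ)+1) p = X k ⟨p - 1, hb1 p q hq hpq⟩ :=
    ent_fin2 X k _ _ _ rfl (show p - 1 + 1 = p by omega)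
  have eR : ent X ((k:ℕ)+1) (p+1) = X k ⟨p, hb2 p q hq hpq⟩ :=
    ent_fin2 X k _ _ _ rfl (show p + 1 = p + 1 by omega)
  show X k ⟨p - 1, hb1 p q hq hpq⟩ - X k ⟨p, hb2 p q hq hpq⟩ = 0
  rw [← eL, ← eR]
  rcases lt_trichotomy ((k:ℕ)+1) p with hcase | hcase | hcase
  · rcases le_or_gt ((k:ℕ)+1) (p - q) with hc | hc
    · have h3 := c3 ((k:ℕ)+1) 1 (by omega) hc (by omega) hq
      rw [show p - 1 + 1 = p by omega] at h3
      rw [h3]; ring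
    · have h4 := c4 1 (p - (k:ℕ)) (by omega) (by omega) (by omega)
      rw [show p + 1 - (p - (k:ℕ)) = (k:ℕ) + 1 by omega, show p + 1 - 1 = p by omega] at h4
      rw [h4]; ring
  · -- (k:ℕ)+1 = p
    have hdiag := hsym k k
    have e1 : epsF p q k = 1 := by simp only [epsF]; exact if_pos (by omega)
    rw [e1] at hdiag
    have hkk : X k k = 0 := by linarith
    have e2 : ent X ((k:ℕ)+1) p = X k k := ent_fin2 X k k _ _ rfl hcase
    have hc2 : ent X ((k:ℕ)+1) (p+1) = 0 := by
      rw [show (k:ℕ)+1 = p by omega]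
      have h0 := c2 1 le_rfl hq
      rw [show p - 1 + 1 = p by omega] at h0
      exact h0
    rw [e2, hkk, hc2]
    ring
  · rcases eq_or_lt_of_le (show p + 1 ≤ (k:ℕ)+1 by omega) with hcase2 | hcase2
    · -- (k:ℕ)+1 = p+1
      have hdiag := hsym k k
      have e1 : epsF p q k = -1 := by simp only [epsF]; exact if_neg (by omega)
      rw [e1] at hdiag
      have hkk : X k k = 0 := by linarith
      have e2 : ent X ((k:ℕ)+1) (p+1) = X k k := ent_fin2 X k k _ _ rfl hcase2.symm
      have hsym2 := hsym k ⟨p - 1, hb1 p q hq hpq⟩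
      have eb : epsF p q (⟨p - 1, hb1 p q hq hpq⟩ : Fin (p+q)) = 1 := by
        simp only [epsF]; exact if_pos (show p - 1 < p by omega)
      rw [eb, e1] at hsym2
      have hc2 := c2 1 le_rfl hq
      rw [show p - 1 + 1 = p by omega] at hc2
      have ePP : ent X p (p+1) = X (⟨p - 1, hb1 p q hq hpq⟩ : Fin (p+q)) k :=
        ent_fin2 X _ k _ _ (show p - 1 + 1 = p by omega) hcase2.symm
      rw [ePP] at hc2
      -- hsym2 : X ⟨p-1⟩ k * 1 + (-1) * X k ⟨p-1⟩ = 0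
      have eL2 : ent X ((k:ℕ)+1) p = X k ⟨p - 1, hb1 p q hq hpq⟩ := eL
      rw [eL2, e2, hkk]
      linarith [hsym2, hc2]
    · -- (k:ℕ)+1 > p+1
      have e1 : epsF p q k = -1 := by simp only [epsF]; exact if_neg (by omega)
      have eb : epsF p q (⟨p - 1, hb1 p q hq hpq⟩ : Fin (p+q)) = 1 := by
        simp only [epsF]; exact if_pos (show p - 1 < p by omega)
      have ec : epsF p q (⟨p, hb2 p q hq hpq⟩ : Fin (p+q)) = -1 := by
        simp only [epsF]; exact if_neg (show ¬ p < p by omega)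
      have hsym1 := hsym k ⟨p - 1, hb1 p q hq hpq⟩
      rw [eb, e1] at hsym1
      have hsym2 := hsym k ⟨p, hb2 p q hq hpq⟩
      rw [ec, e1] at hsym2
      have hc5 := c5 1 ((k:ℕ) - p + 1) le_rfl (by omega) (by omega)
      rw [show p + ((k:ℕ) - p + 1) = (k:ℕ) + 1 by omega, show p + 1 - 1 = p by omega] at hc5
      have eP : ent X p ((k:ℕ)+1) = X (⟨p - 1, hb1 p q hq hpq⟩ : Fin (p+q)) k :=
        ent_fin2 X _ k _ _ (show p - 1 + 1 = p by omega) rfl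
      have eP1 : ent X (p+1) ((k:ℕ)+1) = X (⟨p, hb2 p q hq hpq⟩ : Fin (p+q)) k :=
        ent_fin2 X _ k _ _ (show p + 1 = p + 1 by omega) rfl
      rw [eP, eP1] at hc5
      rw [eL, eR]
      linarith [hsym1, hsym2, hc5]

lemma aSet_mulVec_wv (X : Matrix (Fin (p+q)) (Fin (p+q)) ℝ) (hX : X ∈ aSet p q) :
    X *ᵥ wvF p q = (- ent X p (p+1)) • wvF p q := by
  obtain ⟨hsym, hzero⟩ := hX
  rw [mulVec_wv_eq p q hq hpq]
  funext k
  have hk := k.isLt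
  have eL : ent X ((k:ℕ)+1) p = X k ⟨p - 1, hb1 p q hq hpq⟩ :=
    ent_fin2 X k _ _ _ rfl (show p - 1 + 1 = p by omega)
  have eR : ent X ((k:ℕ)+1) (p+1) = X k ⟨p, hb2 p q hq hpq⟩ :=
    ent_fin2 X k _ _ _ rfl (show p + 1 = p + 1 by omega)
  show X k ⟨p - 1, hb1 p q hq hpq⟩ - X k ⟨p, hb2 p q hq hpq⟩ = _
  rw [← eL, ← eR, Pi.smul_apply, smul_eq_mul]
  have hsym1 := hsym 1 le_rfl hq
  rw [show p - 1 + 1 = p by omega] at hsym1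
  by_cases hk1 : (k:ℕ) = p - 1
  · have hz : ent X ((k:ℕ)+1) p = 0 := by
      refine hzero _ _ (by omega) (by omega) (by omega) (by omega) ?_
      rintro ⟨l, hl1, hl2, (⟨h1, h2⟩ | ⟨h1, h2⟩)⟩ <;> omega
    rw [hz, show (k:ℕ)+1 = p by omega]
    have ewv : wvF p q k = 1 := by simp only [wvF]; exact if_pos hk1
    rw [ewv]; ring
  · by_cases hk2 : (k:ℕ) = p
    · have hz : ent X ((k:ℕ)+1) (p+1) = 0 := by
        refine hzero _ _ (by omega) (by omega) (by omega) (by omega) ?_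
        rintro ⟨l, hl1, hl2, (⟨h1, h2⟩ | ⟨h1, h2⟩)⟩ <;> omega
      rw [hz, show (k:ℕ)+1 = p+1 by omega, ← hsym1]
      have ewv : wvF p q k = -1 := by
        simp only [wvF]; rw [if_neg hk1]; exact if_pos hk2
      rw [ewv]; ring
    · have hz1 : ent X ((k:ℕ)+1) p = 0 := by
        refine hzero _ _ (by omega) (by omega) (by omega) (by omega) ?_
        rintro ⟨l, hl1, hl2, (⟨h1, h2⟩ | ⟨h1, h2⟩)⟩ <;> omega
      have hz2 : ent X ((k:ℕ)+1) (p+1) = 0 := by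
        refine hzero _ _ (by omega) (by omega) (by omega) (by omega) ?_
        rintro ⟨l, hl1, hl2, (⟨h1, h2⟩ | ⟨h1, h2⟩)⟩ <;> omega
      have ewv : wvF p q k = 0 := by
        simp only [wvF]; rw [if_neg hk1]; exact if_neg hk2
      rw [hz1, hz2, ewv]; ring

end
end ANwork
namespace ANwork
section
set_option maxHeartbeats 1000000
open Matrix
variable (p q : ℕ)

lemma Jmat_sq : Jmat p q * Jmat p q = 1 := by
  rw [Jmat, Matrix.diagonal_mul_diagonal]
  have e : (fun i : Fin (p+q) => (if (i:ℕ) < p then (1:ℝ) else -1) * (if (i:ℕ) < p then 1 else -1))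
      = fun _ => 1 := by
    funext i; split_ifs <;> norm_num
  rw [e, Matrix.diagonal_one]

lemma exp_so_J (X : Matrix (Fin (p+q)) (Fin (p+q)) ℝ) (hX : X ∈ soSet p q) :
    (NormedSpace.exp X)ᵀ * Jmat p q * NormedSpace.exp X = Jmat p q := by
  have hJJ := Jmat_sq p q
  have hinv : (Jmat p q)⁻¹ = Jmat p q := Matrix.inv_eq_right_inv hJJ
  have hunit : IsUnit (Jmat p q) := ⟨⟨Jmat p q, Jmat p q, hJJ, hJJ⟩, rfl⟩
  have e1 : Xᵀ * Jmat p q = -(Jmat p q * X) := eq_neg_of_add_eq_zero_left hX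
  have h2 : Xᵀ = Jmat p q * (-X) * (Jmat p q)⁻¹ := by
    calc Xᵀ = Xᵀ * Jmat p q * Jmat p q := by rw [Matrix.mul_assoc, hJJ, Matrix.mul_one]
      _ = -(Jmat p q * X) * Jmat p q := by rw [e1]
      _ = Jmat p q * (-X) * (Jmat p q)⁻¹ := by rw [hinv, neg_mul, Matrix.mul_neg, Matrix.neg_mul]
  have h3 : NormedSpace.exp Xᵀ = Jmat p q * NormedSpace.exp (-X) * (Jmat p q)⁻¹ := by
    rw [h2]; exact Matrix.exp_conj (Jmat p q) (-X) hunit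
  rw [← Matrix.exp_transpose, h3, hinv]
  have h4 : NormedSpace.exp (-X) * NormedSpace.exp X = 1 := by
    rw [← Matrix.exp_add_of_commute (-X) X (Commute.neg_left (Commute.refl X)),
      neg_add_cancel, NormedSpace.exp_zero]
  calc Jmat p q * NormedSpace.exp (-X) * Jmat p q * Jmat p q * NormedSpace.exp X
      = Jmat p q * NormedSpace.exp (-X) * (Jmat p q * Jmat p q) * NormedSpace.exp X := by
        rw [Matrix.mul_assoc (Jmat p q * NormedSpace.exp (-X))]
    _ = Jmat p q * (NormedSpace.exp (-X) * NormedSpace.exp X) := by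
        rw [hJJ, Matrix.mul_one, Matrix.mul_assoc]
    _ = Jmat p q := by rw [h4, Matrix.mul_one]

lemma ip_eq_dot (x y : Fin (p+q) → ℝ) : ip p q x y = x ⬝ᵥ (Jmat p q *ᵥ y) := by
  rw [ip, dotProduct]
  refine Finset.sum_congr rfl fun i _ => ?_
  rw [Jmat, Matrix.mulVec_diagonal]
  ring

lemma ip_invariant (A : Matrix (Fin (p+q)) (Fin (p+q)) ℝ)
    (hA : Aᵀ * Jmat p q * A = Jmat p q) (y z : Fin (p+q) → ℝ) :
    ip p q (A *ᵥ y) (A *ᵥ z) = ip p q y z := by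
  rw [ip_eq_dot, ip_eq_dot, Matrix.mulVec_mulVec]
  have e1 : A *ᵥ y = y ᵥ* Aᵀ := by rw [Matrix.vecMul_transpose]
  rw [e1, dotProduct_mulVec, Matrix.vecMul_vecMul, ← Matrix.mul_assoc, hA,
    ← dotProduct_mulVec]

def Sgrp (p q : ℕ) : Subgroup (Matrix (Fin (p+q)) (Fin (p+q)) ℝ)ˣ where
  carrier := {g | (g : Matrix (Fin (p+q)) (Fin (p+q)) ℝ)ᵀ * Jmat p q * g = Jmat p q ∧
    ∃ lam : ℝ, 0 < lam ∧ (g : Matrix (Fin (p+q)) (Fin (p+q)) ℝ) *ᵥ wvF p q = lam • wvF p q}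
  one_mem' := ⟨by simp, 1, one_pos, by simp⟩
  mul_mem' := by
    rintro a b ⟨ha1, la, hla, ha2⟩ ⟨hb1, lb, hlb, hb2⟩
    constructor
    · have e : ((a * b : (Matrix (Fin (p+q)) (Fin (p+q)) ℝ)ˣ) :
          Matrix (Fin (p+q)) (Fin (p+q)) ℝ)ᵀ * Jmat p q * (a * b : (Matrix (Fin (p+q)) (Fin (p+q)) ℝ)ˣ)
          = (b : Matrix (Fin (p+q)) (Fin (p+q)) ℝ)ᵀ *
            ((a : Matrix (Fin (p+q)) (Fin (p+q)) ℝ)ᵀ * Jmat p q * a) * b := by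
        rw [Units.val_mul, Matrix.transpose_mul]
        noncomm_ring
      rw [e, ha1, hb1]
    · refine ⟨la * lb, mul_pos hla hlb, ?_⟩
      rw [Units.val_mul, ← Matrix.mulVec_mulVec, hb2, Matrix.mulVec_smul, ha2, smul_smul,
        mul_comm lb la]
  inv_mem' := by
    rintro g ⟨h1, lam, hlam, h2⟩
    constructor
    · calc ((g⁻¹).val)ᵀ * Jmat p q * (g⁻¹).val
          = ((g⁻¹).val)ᵀ * ((g.val)ᵀ * Jmat p q * g.val) * (g⁻¹).val := by rw [h1]
        _ = (g.val * (g⁻¹).val)ᵀ * Jmat p q * (g.val * (g⁻¹).val) := by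
            rw [Matrix.transpose_mul]; noncomm_ring
        _ = Jmat p q := by
            rw [← Units.val_mul, mul_inv_cancel]
            simp
    · refine ⟨lam⁻¹, inv_pos.mpr hlam, ?_⟩
      have h3 : (g⁻¹).val *ᵥ (g.val *ᵥ wvF p q) = wvF p q := by
        rw [Matrix.mulVec_mulVec, ← Units.val_mul, inv_mul_cancel]
        simp
      rw [h2, Matrix.mulVec_smul] at h3
      calc (g⁻¹).val *ᵥ wvF p q
          = lam⁻¹ • (lam • ((g⁻¹).val *ᵥ wvF p q)) := by
            rw [smul_smul, inv_mul_cancel₀ (ne_of_gt hlam), one_smul]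
        _ = lam⁻¹ • wvF p q := by rw [h3]

variable (hq : 1 ≤ q) (hpq : q ≤ p)
include hq hpq

lemma ANgrp_le_Sgrp : ANgrp p q ≤ Sgrp p q := by
  rw [ANgrp]
  apply Subgroup.closure_le (Sgrp p q) |>.mpr
  rintro g ⟨X, hX, rfl⟩
  have hso : X ∈ soSet p q := hX.elim (aSet_sub_soSet p q hq hpq X) (fun h => h.1)
  have hc : ∃ c : ℝ, X *ᵥ wvF p q = c • wvF p q := by
    rcases hX with hX | hX
    · exact ⟨_, aSet_mulVec_wv p q hq hpq X hX⟩
    · exact ⟨0, by rw [nSet_mulVec_wv p q hq hpq X hX, zero_smul]⟩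
  obtain ⟨c, hc⟩ := hc
  refine ⟨exp_so_J p q X hso, Real.exp c, Real.exp_pos c, ?_⟩
  exact exp_mulVec_eigen X (wvF p q) c hc

lemma vent_pair (v : Fin (p+q) → ℝ) :
    vent v p + vent v (p + 1) = ip p q v (wvF p q) := by
  rw [ip_wv p q hq hpq, vent, vent, dif_pos (show p - 1 < p + q by omega),
    dif_pos (show p + 1 - 1 < p + q by omega)]
  rfl

end
end ANwork
namespace ANwork
section
set_option maxHeartbeats 1000000
open Matrix
variable (p q : ℕ) (hq : 1 ≤ q) (hpq : q ≤ p)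
include hq hpq

lemma surj_from_base (r : ℝ) (hr : 0 < r) (v : Fin (p + q) → ℝ)
    (hv0 : ip p q v v = -r ^ 2) (hv1 : 0 < ip p q v (wvF p q)) :
    ∃ g ∈ ANgrp p q,
      (g : Matrix (Fin (p+q)) (Fin (p+q)) ℝ) *ᵥ ((r/2) • (vbF p q - wvF p q)) = v := by
  have hrne : r ≠ 0 := ne_of_gt hr
  set W := wvF p q with hWdef
  set V := vbF p q with hVdef
  have hVW : ip p q V W = 2 := ip_vb_wv p q hq hpq
  have hWW : ip p q W W = 0 := ip_wv_wv p q hq hpq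
  have hWV : ip p q W V = 2 := ip_wv_vb p q hq hpq
  have hVV : ip p q V V = 0 := ip_vb_vb p q hq hpq
  set s : ℝ := ip p q v W / r with hsdef
  have hs : 0 < s := div_pos hv1 hr
  have hsne : s ≠ 0 := ne_of_gt hs
  have hrsne : r * s ≠ 0 := mul_ne_zero hrne hsne
  have hrs : r * s = ip p q v W := by rw [hsdef]; field_simp
  set β : ℝ := ip p q v W / 2 with hβdef
  set γ : ℝ := ip p q v V / 2 with hγdef
  set u' : Fin (p+q) → ℝ := v - β • V - γ • W with hu'def
  set u : Fin (p+q) → ℝ := (r*s)⁻¹ • u' with hudef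
  set t : ℝ := Real.log s with htdef
  have hu'W : ip p q u' W = 0 := by
    rw [hu'def, ip_sub_left, ip_sub_left, ip_smul_left, ip_smul_left, hVW, hWW, hβdef]; ring
  have hu'V : ip p q u' V = 0 := by
    rw [hu'def, ip_sub_left, ip_sub_left, ip_smul_left, ip_smul_left, hWV, hVV, hγdef]; ring
  have hVu' : ip p q V u' = 0 := by rw [ip_comm]; exact hu'V
  have hWu' : ip p q W u' = 0 := by rw [ip_comm]; exact hu'W
  have hvdecomp : v = u' + β • V + γ • W := by rw [hu'def]; abel
  have hQ : ip p q u' u' + 4*β*γ = -r^2 := by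
    have hexp := hv0
    rw [hvdecomp] at hexp
    simp only [ip_add_left, ip_add_right, ip_smul_left, ip_smul_right] at hexp
    rw [hu'V, hu'W, hVu', hWu', hVV, hWW, hVW, hWV] at hexp
    linarith
  have ipvW : ip p q v W = v ⟨p - 1, hb1 p q hq hpq⟩ + v ⟨p, hb2 p q hq hpq⟩ :=
    ip_wv p q hq hpq v
  have ipvV : ip p q v V = v ⟨p - 1, hb1 p q hq hpq⟩ - v ⟨p, hb2 p q hq hpq⟩ :=
    ip_vb p q hq hpq v
  have hu'1 : u' ⟨p - 1, hb1 p q hq hpq⟩ = 0 := by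
    rw [hu'def]
    simp only [Pi.sub_apply, Pi.smul_apply, smul_eq_mul]
    rw [hVdef, hWdef, vb_at1 p q hq hpq, wv_at1 p q hq hpq, hβdef, hγdef, ipvW, ipvV]; ring
  have hu'2 : u' ⟨p, hb2 p q hq hpq⟩ = 0 := by
    rw [hu'def]
    simp only [Pi.sub_apply, Pi.smul_apply, smul_eq_mul]
    rw [hVdef, hWdef, vb_at2 p q hq hpq, wv_at2 p q hq hpq, hβdef, hγdef, ipvW, ipvV]; ring
  have hu1 : ∀ j : Fin (p+q), (j : ℕ) = p - 1 → u j = 0 := by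
    intro j hj
    have e : j = ⟨p - 1, hb1 p q hq hpq⟩ := Fin.ext hj
    rw [e, hudef, Pi.smul_apply, hu'1, smul_zero]
  have hu2 : ∀ j : Fin (p+q), (j : ℕ) = p → u j = 0 := by
    intro j hj
    have e : j = ⟨p, hb2 p q hq hpq⟩ := Fin.ext hj
    rw [e, hudef, Pi.smul_apply, hu'2, smul_zero]
  have hMmem : MM p q u ∈ nSet p q := MM_mem_nSet p q hq hpq u hu1 hu2
  have hAmem : t • HH p q ∈ aSet p q := smulHH_mem_aSet p q hq hpq t
  refine ⟨expUnit (MM p q u) * expUnit (t • HH p q), ?_, ?_⟩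
  · exact Subgroup.mul_mem _
      (Subgroup.subset_closure ⟨MM p q u, Or.inr hMmem, rfl⟩)
      (Subgroup.subset_closure ⟨t • HH p q, Or.inl hAmem, rfl⟩)
  · rw [Units.val_mul, ← Matrix.mulVec_mulVec]
    have hA1 : (t • HH p q) *ᵥ V = t • V := by
      rw [Matrix.smul_mulVec, HH_mulVec_vb p q hq hpq]
    have hA2 : (t • HH p q) *ᵥ W = (-t) • W := by
      rw [Matrix.smul_mulVec, HH_mulVec_wv p q hq hpq, smul_neg, ← neg_smul]
    have hgA_V : NormedSpace.exp (t • HH p q) *ᵥ V = s • V := by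
      rw [exp_mulVec_eigen _ V t hA1, htdef, Real.exp_log hs]
    have hgA_W : NormedSpace.exp (t • HH p q) *ᵥ W = s⁻¹ • W := by
      rw [exp_mulVec_eigen _ W (-t) hA2, htdef, Real.exp_neg, Real.exp_log hs]
    have hx0act : (expUnit (t • HH p q) : Matrix (Fin (p+q)) (Fin (p+q)) ℝ) *ᵥ
        ((r/2) • (V - W)) = (r*s/2) • V - (r/(2*s)) • W := by
      show NormedSpace.exp (t • HH p q) *ᵥ ((r/2) • (V - W)) = _
      rw [Matrix.mulVec_smul, Matrix.mulVec_sub, hgA_V, hgA_W, smul_sub, smul_smul, smul_smul]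
      have e1 : r/2*s = r*s/2 := by ring
      have e2 : r/2*s⁻¹ = r/(2*s) := by field_simp
      rw [e1, e2]
    rw [hx0act]
    set y : Fin (p+q) → ℝ := (r*s/2) • V - (r/(2*s)) • W with hydef
    have hyW : ip p q y W = r*s := by
      rw [hydef, ip_sub_left, ip_smul_left, ip_smul_left, hVW, hWW]; ring
    have hyV : ip p q y V = -(r/s) := by
      rw [hydef, ip_sub_left, ip_smul_left, ip_smul_left, hVV, hWV]
      field_simp
      ring
    have huW : ip p q u W = 0 := by rw [hudef, ip_smul_left, hu'W, mul_zero]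
    have huV : ip p q u V = 0 := by rw [hudef, ip_smul_left, hu'V, mul_zero]
    have huy : ip p q u y = 0 := by
      rw [hydef, ip_sub_right, ip_smul_right, ip_smul_right, huW, huV]; ring
    have hMy : MM p q u *ᵥ y = u' := by
      rw [MM_mulVec p q hq hpq, hyW, huy, zero_smul, sub_zero, hudef, smul_smul,
        mul_inv_cancel₀ hrsne, one_smul]
    set Q : ℝ := ip p q u' u' with hQdef
    have hQ' : ip p q u u' = (r*s)⁻¹ * Q := by rw [hudef, ip_smul_left, hQdef]
    have hMu' : MM p q u *ᵥ u' = (-((r*s)⁻¹ * Q)) • W := by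
      rw [MM_mulVec p q hq hpq, hu'W, hQ', zero_smul, zero_sub, neg_smul]
    have hMW : MM p q u *ᵥ W = 0 := by
      rw [MM_mulVec p q hq hpq, hWW, huW, zero_smul, zero_smul, sub_zero]
    have h3 : MM p q u *ᵥ (MM p q u *ᵥ (MM p q u *ᵥ y)) = 0 := by
      rw [hMy, hMu', Matrix.mulVec_smul, hMW, smul_zero]
    show NormedSpace.exp (MM p q u) *ᵥ y = v
    rw [exp_mulVec_nilp (MM p q u) y h3, hMy, hMu']
    have c1 : r*s/2 = β := by rw [hβdef, ← hrs]
    have c2 : -(r/(2*s)) + 2⁻¹ * (-((r*s)⁻¹ * Q)) = γ := by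
      have hQval : Q = -r^2 - 4*β*γ := by rw [hQdef]; linarith
      rw [hQval, ← c1]
      field_simp
      ring
    rw [hvdecomp, hydef]
    funext k
    simp only [Pi.add_apply, Pi.sub_apply, Pi.smul_apply, smul_eq_mul]
    linear_combination (V k) * c1 + (W k) * c2

end
end ANwork

/-- For `r > 0`, `H₊ := {v : ⟨v,v⟩ = -r², v^p + v^{p+1} > 0}` is a single
`AN`-orbit: for every `x ∈ H₊`, `AN(x) = H₊`. -/
theorem ANgrp_orbit_hyperbolic (p q : ℕ) (hq : 1 ≤ q) (hpq : q ≤ p) (r : ℝ) (hr : 0 < r)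
    (x : Fin (p + q) → ℝ)
    (hx0 : ip p q x x = -r ^ 2) (hx1 : 0 < vent x p + vent x (p + 1)) :
    orb (ANgrp p q) x = {v | ip p q v v = -r ^ 2 ∧ 0 < vent v p + vent v (p + 1)} := by
  ext v
  simp only [orb, Set.mem_setOf_eq]
  have hx1' : 0 < ip p q x (ANwork.wvF p q) := by
    rw [← ANwork.vent_pair p q hq hpq]; exact hx1
  constructor
  · rintro ⟨g, hg, rfl⟩
    obtain ⟨hJ, lam, hlam, hwv⟩ := ANwork.ANgrp_le_Sgrp p q hq hpq hg
    constructor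
    · rw [ANwork.ip_invariant p q _ hJ]; exact hx0
    · rw [ANwork.vent_pair p q hq hpq]
      have hW : ANwork.wvF p q = lam⁻¹ • ((g : Matrix (Fin (p+q)) (Fin (p+q)) ℝ) *ᵥ ANwork.wvF p q) := by
        rw [hwv, smul_smul, inv_mul_cancel₀ (ne_of_gt hlam), one_smul]
      have e : ip p q ((g : Matrix (Fin (p+q)) (Fin (p+q)) ℝ) *ᵥ x) (ANwork.wvF p q)
          = lam⁻¹ * ip p q x (ANwork.wvF p q) := by
        calc ip p q ((g : Matrix (Fin (p+q)) (Fin (p+q)) ℝ) *ᵥ x) (ANwork.wvF p q)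
            = ip p q ((g : Matrix (Fin (p+q)) (Fin (p+q)) ℝ) *ᵥ x)
              (lam⁻¹ • ((g : Matrix (Fin (p+q)) (Fin (p+q)) ℝ) *ᵥ ANwork.wvF p q)) := by
              rw [← hW]
          _ = lam⁻¹ * ip p q ((g : Matrix (Fin (p+q)) (Fin (p+q)) ℝ) *ᵥ x)
              ((g : Matrix (Fin (p+q)) (Fin (p+q)) ℝ) *ᵥ ANwork.wvF p q) :=
              ANwork.ip_smul_right p q _ _ _
          _ = lam⁻¹ * ip p q x (ANwork.wvF p q) := by rw [ANwork.ip_invariant p q _ hJ]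
      rw [e]
      exact mul_pos (inv_pos.mpr hlam) hx1'
  · rintro ⟨hv0, hv1⟩
    have hv1' : 0 < ip p q v (ANwork.wvF p q) := by
      rw [← ANwork.vent_pair p q hq hpq]; exact hv1
    obtain ⟨g1, hm1, he1⟩ := ANwork.surj_from_base p q hq hpq r hr v hv0 hv1'
    obtain ⟨g0, hm0, he0⟩ := ANwork.surj_from_base p q hq hpq r hr x hx0 hx1'
    refine ⟨g1 * g0⁻¹, Subgroup.mul_mem _ hm1 (Subgroup.inv_mem _ hm0), ?_⟩
    have h1 : ((g0⁻¹ : (Matrix (Fin (p+q)) (Fin (p+q)) ℝ)ˣ) : Matrix (Fin (p+q)) (Fin (p+q)) ℝ)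
        *ᵥ x = (r/2) • (ANwork.vbF p q - ANwork.wvF p q) := by
      rw [← he0, Matrix.mulVec_mulVec, ← Units.val_mul, inv_mul_cancel]
      simp
    rw [Units.val_mul, ← Matrix.mulVec_mulVec, h1, he1]
end

section
/- Let r > 0 and S₊ := { v ∈ ℝ^{p+q} : ⟨v,v⟩ = r² and v^p + v^{p+1} > 0 }. For every x ∈ S₊, the AN-orbit of x equals S₊; in other words, S₊ is a single AN-orbit. -/
open Matrix

noncomputable section ANaux

namespace ANaux
open Matrix

/-! ### exp lemmas -/

def mulVecAtCLM {n : ℕ} (u : Fin n → ℝ) :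
    Matrix (Fin n) (Fin n) ℝ →L[ℝ] (Fin n → ℝ) :=
  LinearMap.toContinuousLinearMap
    { toFun := fun M => M *ᵥ u
      map_add' := fun A B => Matrix.add_mulVec A B u
      map_smul' := fun c A => by simp [Matrix.smul_mulVec] }

lemma exp_mulVec_eq_tsum {n : ℕ} (M : Matrix (Fin n) (Fin n) ℝ) (u : Fin n → ℝ) :
    NormedSpace.exp M *ᵥ u = ∑' k : ℕ, ((k.factorial : ℝ)⁻¹) • (M ^ k *ᵥ u) := by
  letI : NormedRing (Matrix (Fin n) (Fin n) ℝ) := Matrix.linftyOpNormedRing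
  letI : NormedAlgebra ℝ (Matrix (Fin n) (Fin n) ℝ) := Matrix.linftyOpNormedAlgebra
  have hs : Summable fun k : ℕ => ((k.factorial : ℝ)⁻¹) • M ^ k :=
    NormedSpace.expSeries_summable' (𝕂 := ℝ) M
  have h0 : NormedSpace.exp M *ᵥ u = mulVecAtCLM u (NormedSpace.exp M) := rfl
  rw [h0, NormedSpace.exp_eq_tsum ℝ, (mulVecAtCLM u).map_tsum hs]
  congr 1
  funext k
  simp [mulVecAtCLM, Matrix.smul_mulVec]

lemma exp_mulVec_eigen {n : ℕ} (M : Matrix (Fin n) (Fin n) ℝ) (u : Fin n → ℝ) (c : ℝ)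
    (h : M *ᵥ u = c • u) :
    NormedSpace.exp M *ᵥ u = Real.exp c • u := by
  have hpow : ∀ k : ℕ, M ^ k *ᵥ u = (c ^ k) • u := by
    intro k
    induction k with
    | zero => simp
    | succ k ih =>
      rw [pow_succ', ← Matrix.mulVec_mulVec, ih, Matrix.mulVec_smul, h, smul_smul, mul_comm,
        pow_succ']
  rw [exp_mulVec_eq_tsum]
  have hsum : Summable fun k : ℕ => ((k.factorial : ℝ)⁻¹) * c ^ k := by
    have := NormedSpace.expSeries_summable' (𝕂 := ℝ) c
    simpa [smul_eq_mul] using this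
  calc ∑' k : ℕ, ((k.factorial : ℝ)⁻¹) • (M ^ k *ᵥ u)
      = ∑' k : ℕ, (((k.factorial : ℝ)⁻¹) * c ^ k) • u := by
        congr 1; funext k; rw [hpow, smul_smul]
    _ = (∑' k : ℕ, ((k.factorial : ℝ)⁻¹) * c ^ k) • u := hsum.tsum_smul_const u
    _ = Real.exp c • u := by
        congr 1
        rw [Real.exp_eq_exp_ℝ, NormedSpace.exp_eq_tsum ℝ]
        simp [smul_eq_mul]

lemma exp_mulVec_seq {n : ℕ} (M : Matrix (Fin n) (Fin n) ℝ) (u u₁ u₂ : Fin n → ℝ)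
    (h1 : M *ᵥ u = u₁) (h2 : M *ᵥ u₁ = u₂) (h3 : M *ᵥ u₂ = 0) :
    NormedSpace.exp M *ᵥ u = u + u₁ + (2⁻¹ : ℝ) • u₂ := by
  have e2 : M ^ 2 *ᵥ u = u₂ := by rw [pow_two, ← Matrix.mulVec_mulVec, h1, h2]
  have hpow : ∀ k : ℕ, 3 ≤ k → M ^ k *ᵥ u = 0 := by
    intro k hk
    induction k with
    | zero => omega
    | succ k ih =>
      rcases Nat.lt_or_ge k 3 with hk3 | hk3
      · have hk2 : k = 2 := by omega
        subst hk2
        rw [pow_succ', ← Matrix.mulVec_mulVec, e2, h3]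
      · rw [pow_succ', ← Matrix.mulVec_mulVec, ih hk3, Matrix.mulVec_zero]
  rw [exp_mulVec_eq_tsum]
  rw [tsum_eq_sum (s := Finset.range 3) (by
    intro k hk
    rw [hpow k (by simpa using hk), smul_zero])]
  rw [Finset.sum_range_succ, Finset.sum_range_succ, Finset.sum_range_succ, Finset.sum_range_zero]
  have e0 : M ^ 0 *ᵥ u = u := by simp
  have e1 : M ^ 1 *ᵥ u = u₁ := by rw [pow_one, h1]
  rw [e0, e1, e2]
  norm_num

/-! ### vectors and generators -/

def fv (p : ℕ) {n : ℕ} : Fin n → ℝ :=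
  fun i => (if (i : ℕ) + 1 = p then 1 else 0) + (if (i : ℕ) = p then 1 else 0)

def wv (p : ℕ) {n : ℕ} : Fin n → ℝ :=
  fun i => (if (i : ℕ) + 1 = p then 1 else 0) - (if (i : ℕ) = p then 1 else 0)

def dv (p : ℕ) {n : ℕ} : Fin n → ℝ := fun i => if (i : ℕ) < p then 1 else -1

def ePv (p : ℕ) {n : ℕ} : Fin n → ℝ := fun i => if (i : ℕ) + 1 = p then 1 else 0
def ePv' (p : ℕ) {n : ℕ} : Fin n → ℝ := fun i => if (i : ℕ) = p then 1 else 0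

def aG (p : ℕ) {n : ℕ} (t : ℝ) : Matrix (Fin n) (Fin n) ℝ :=
  fun i j => (if (i : ℕ) + 1 = p then 1 else 0) * (if (j : ℕ) = p then t else 0) +
    (if (i : ℕ) = p then 1 else 0) * (if (j : ℕ) + 1 = p then t else 0)

def nG (p : ℕ) {n : ℕ} (z : Fin n → ℝ) : Matrix (Fin n) (Fin n) ℝ :=
  fun i j => z i * fv p j - wv p i * (dv p j * z j)

lemma dv_mul_wv {n p : ℕ} (i : Fin n) : dv p i * wv p i = fv p i := by
  unfold dv wv fv
  rcases eq_or_ne ((i : ℕ) + 1) p with h | h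
  · simp [h, show (i:ℕ) < p by omega, show (i:ℕ) ≠ p by omega]
  · rcases eq_or_ne ((i : ℕ)) p with h2 | h2
    · simp [h, h2, show ¬ ((i:ℕ) < p) by omega]
    · simp [h, h2]

/-! ### sums against indicator vectors -/

lemma sum_ite_val {n k : ℕ} (hk : k < n) (f : Fin n → ℝ) :
    (∑ j : Fin n, if (j : ℕ) = k then f j else 0) = f ⟨k, hk⟩ := by
  rw [show (fun j : Fin n => if (j : ℕ) = k then f j else 0)
      = fun j : Fin n => if j = ⟨k, hk⟩ then f j else 0 by
    funext j; congr 1; simp [Fin.ext_iff]]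
  simp [Finset.sum_ite_eq']

lemma sum_ite_val' {n k : ℕ} (hk1 : 1 ≤ k) (hk : k - 1 < n) (f : Fin n → ℝ) :
    (∑ j : Fin n, if (j : ℕ) + 1 = k then f j else 0) = f ⟨k - 1, hk⟩ := by
  rw [show (fun j : Fin n => if (j : ℕ) + 1 = k then f j else 0)
      = fun j : Fin n => if (j : ℕ) = k - 1 then f j else 0 by
    funext j; congr 1; simp; omega]
  exact sum_ite_val hk f

end ANaux
end ANaux
noncomputable section ANaux2
namespace ANaux
open Matrix

variable {p q n : ℕ}

lemma sum_mul_fv (hp : 1 ≤ p) (hpn : p < n) (g : Fin n → ℝ) :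
    ∑ j : Fin n, g j * fv p j = g ⟨p - 1, by omega⟩ + g ⟨p, hpn⟩ := by
  unfold fv
  simp only [mul_add]
  rw [Finset.sum_add_distrib]
  congr 1
  · rw [show (fun j : Fin n => g j * if (j : ℕ) + 1 = p then (1:ℝ) else 0)
        = fun j : Fin n => if (j : ℕ) + 1 = p then g j else 0 by
      funext j; split_ifs <;> simp]
    exact sum_ite_val' hp (by omega) g
  · rw [show (fun j : Fin n => g j * if (j : ℕ) = p then (1:ℝ) else 0)
        = fun j : Fin n => if (j : ℕ) = p then g j else 0 by
      funext j; split_ifs <;> simp]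
    exact sum_ite_val hpn g

/-- `ip` written with `dv`. -/
lemma ip_eq_sum_dv (x y : Fin (p + q) → ℝ) :
    ip p q x y = ∑ i : Fin (p + q), dv p i * x i * y i := rfl

lemma ip_dot (x y : Fin (p + q) → ℝ) :
    ip p q x y = x ⬝ᵥ (Jmat p q *ᵥ y) := by
  unfold ip Jmat dotProduct
  refine Finset.sum_congr rfl fun i _ => ?_
  rw [Matrix.mulVec_diagonal]
  ring

lemma fv_dot (hp : 1 ≤ p) (hpn : p < n) (u : Fin n → ℝ) :
    fv p ⬝ᵥ u = u ⟨p - 1, by omega⟩ + u ⟨p, hpn⟩ := by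
  unfold dotProduct
  rw [show (fun j : Fin n => fv p j * u j) = fun j : Fin n => u j * fv p j by
    funext j; ring]
  exact sum_mul_fv hp hpn u

lemma vent_sum_eq (hp : 1 ≤ p) (hq : 1 ≤ q) (u : Fin (p + q) → ℝ) :
    vent u p + vent u (p + 1) = fv p ⬝ᵥ u := by
  rw [fv_dot hp (by omega) u]
  unfold vent
  rw [dif_pos (show p - 1 < p + q by omega), dif_pos (show p + 1 - 1 < p + q by omega)]
  congr 2

/-! ### entries -/

lemma ent_fin {n : ℕ} (X : Matrix (Fin n) (Fin n) ℝ) (i j : Fin n) :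
    X i j = ent X ((i : ℕ) + 1) ((j : ℕ) + 1) := by
  unfold ent
  rw [dif_pos ⟨by omega, by omega⟩]
  first
  | rfl
  | (congr 1 <;> · apply Fin.ext; simp)

lemma ent_def {n : ℕ} (X : Matrix (Fin n) (Fin n) ℝ) {I J : ℕ}
    (hI : I - 1 < n) (hJ : J - 1 < n) :
    ent X I J = X ⟨I - 1, hI⟩ ⟨J - 1, hJ⟩ := dif_pos ⟨hI, hJ⟩

/-- pointwise form of membership in `soSet`. -/
lemma soSet_entry {X : Matrix (Fin (p + q)) (Fin (p + q)) ℝ} (hX : X ∈ soSet p q)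
    (i j : Fin (p + q)) :
    X j i * dv p j + dv p i * X i j = 0 := by
  have h : (Xᵀ * Jmat p q + Jmat p q * X) i j = (0 : Matrix (Fin (p+q)) (Fin (p+q)) ℝ) i j := by
    rw [hX]
  simpa [Matrix.add_apply, Matrix.mul_diagonal, Matrix.diagonal_mul, Jmat, dv,
    Matrix.transpose_apply] using h

lemma soSet_ent {X : Matrix (Fin (p + q)) (Fin (p + q)) ℝ} (hX : X ∈ soSet p q)
    {I J : ℕ} (hI1 : 1 ≤ I) (hI : I ≤ p + q) (hJ1 : 1 ≤ J) (hJ : J ≤ p + q) :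
    ent X J I * (if J ≤ p then (1:ℝ) else -1) + (if I ≤ p then (1:ℝ) else -1) * ent X I J = 0 := by
  have h := soSet_entry hX ⟨I - 1, by omega⟩ ⟨J - 1, by omega⟩
  rw [ent_def X (by omega) (by omega), ent_def X (by omega) (by omega)]
  unfold dv at h
  simpa [show ((I : ℕ) - 1 < p) = (I ≤ p) by simp; omega,
    show ((J : ℕ) - 1 < p) = (J ≤ p) by simp; omega] using h

lemma soSet_skew {X : Matrix (Fin (p + q)) (Fin (p + q)) ℝ} (hX : X ∈ soSet p q)
    {I J : ℕ} (hI1 : 1 ≤ I) (hI : I ≤ p) (hJ1 : 1 ≤ J) (hJ : J ≤ p) :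
    ent X I J = - ent X J I := by
  have h := soSet_ent hX hI1 (by omega) hJ1 (by omega) (q := q)
  rw [if_pos hJ, if_pos hI] at h
  linarith

lemma soSet_cross {X : Matrix (Fin (p + q)) (Fin (p + q)) ℝ} (hX : X ∈ soSet p q)
    {I J : ℕ} (hI1 : 1 ≤ I) (hI : I ≤ p) (hJ1 : p < J) (hJ : J ≤ p + q) :
    ent X I J = ent X J I := by
  have h := soSet_ent hX hI1 (by omega) (by omega : 1 ≤ J) hJ (q := q)
  rw [if_neg (by omega), if_pos hI] at h
  linarith

lemma soSet_skew' {X : Matrix (Fin (p + q)) (Fin (p + q)) ℝ} (hX : X ∈ soSet p q)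
    {I J : ℕ} (hI1 : p < I) (hI : I ≤ p + q) (hJ1 : p < J) (hJ : J ≤ p + q) :
    ent X I J = - ent X J I := by
  have h := soSet_ent hX (by omega : 1 ≤ I) hI (by omega : 1 ≤ J) hJ (q := q)
  rw [if_neg (by omega), if_neg (by omega)] at h
  linarith

end ANaux
end ANaux2
noncomputable section ANaux3
namespace ANaux
open Matrix
set_option maxHeartbeats 2000000

variable {p q n : ℕ}

/-! ### entry formulas for the generators -/

lemma ent_aG (t : ℝ) (I J : ℕ) (hI1 : 1 ≤ I) (hI : I ≤ p + q) (hJ1 : 1 ≤ J) (hJ : J ≤ p + q) :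
    ent (aG p (n := p + q) t) I J =
      (if I = p then (1:ℝ) else 0) * (if J = p + 1 then t else 0) +
      (if I = p + 1 then (1:ℝ) else 0) * (if J = p then t else 0) := by
  rw [ent_def _ (by omega) (by omega)]
  unfold aG
  simp only [show ((I - 1 : ℕ) + 1 = p) ↔ (I = p) from by omega,
    show ((I - 1 : ℕ) = p) ↔ (I = p + 1) from by omega,
    show ((J - 1 : ℕ) + 1 = p) ↔ (J = p) from by omega,
    show ((J - 1 : ℕ) = p) ↔ (J = p + 1) from by omega]

lemma ent_nG (z : Fin (p + q) → ℝ) (I J : ℕ)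
    (hI1 : 1 ≤ I) (hI : I ≤ p + q) (hJ1 : 1 ≤ J) (hJ : J ≤ p + q) :
    ent (nG p z) I J =
      vent z I * ((if J = p then (1:ℝ) else 0) + (if J = p + 1 then 1 else 0)) -
      ((if I = p then (1:ℝ) else 0) - (if I = p + 1 then 1 else 0)) *
        ((if J ≤ p then (1:ℝ) else -1) * vent z J) := by
  rw [ent_def _ (by omega) (by omega)]
  unfold nG fv wv dv vent
  rw [dif_pos (show I - 1 < p + q by omega), dif_pos (show J - 1 < p + q by omega)]
  simp only [show ((I - 1 : ℕ) + 1 = p) ↔ (I = p) from by omega,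
    show ((I - 1 : ℕ) = p) ↔ (I = p + 1) from by omega,
    show ((J - 1 : ℕ) + 1 = p) ↔ (J = p) from by omega,
    show ((J - 1 : ℕ) = p) ↔ (J = p + 1) from by omega,
    show ((J - 1 : ℕ) < p) ↔ (J ≤ p) from by omega]

/-! ### generator memberships -/

lemma aG_mem_soSet (hp : 1 ≤ p) (t : ℝ) : aG p (n := p + q) t ∈ soSet p q := by
  show (aG p t)ᵀ * Jmat p q + Jmat p q * aG p t = 0
  ext i j
  simp only [Matrix.add_apply, Matrix.mul_diagonal, Matrix.diagonal_mul, Jmat,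
    Matrix.transpose_apply, Matrix.zero_apply]
  unfold aG
  split_ifs <;> first | ring1 | (exfalso; omega)

lemma nG_mem_soSet (hp : 1 ≤ p) (z : Fin (p + q) → ℝ) : nG p z ∈ soSet p q := by
  show (nG p z)ᵀ * Jmat p q + Jmat p q * nG p z = 0
  ext i j
  simp only [Matrix.add_apply, Matrix.mul_diagonal, Matrix.diagonal_mul, Jmat,
    Matrix.transpose_apply, Matrix.zero_apply]
  show (nG p z j i * dv p j) + dv p i * nG p z i j = 0
  unfold nG
  have ki := dv_mul_wv (n := p + q) (p := p) i
  have kj := dv_mul_wv (n := p + q) (p := p) j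
  linear_combination (-(dv p i * z i)) * kj + (-(dv p j * z j)) * ki

lemma aG_mem_aSet (hq : 1 ≤ q) (hpq : q ≤ p) (t : ℝ) : aG p (n := p + q) t ∈ aSet p q := by
  constructor
  · intro l hl1 hl2
    rw [ent_aG t (p - l + 1) (p + l) (by omega) (by omega) (by omega) (by omega),
      ent_aG t (p + l) (p - l + 1) (by omega) (by omega) (by omega) (by omega)]
    split_ifs <;> first | ring1 | (exfalso; omega)
  · intro I J hI1 hI hJ1 hJ hns
    rw [ent_aG t I J hI1 hI hJ1 hJ]
    have h1 : ¬ (I = p ∧ J = p + 1) := by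
      rintro ⟨e1, e2⟩
      exact hns ⟨1, le_refl 1, hq, Or.inl ⟨by omega, by omega⟩⟩
    have h2 : ¬ (I = p + 1 ∧ J = p) := by
      rintro ⟨e1, e2⟩
      exact hns ⟨1, le_refl 1, hq, Or.inr ⟨by omega, by omega⟩⟩
    split_ifs <;>
      first
        | ring1
        | (exfalso; first
            | exact h1 ⟨by assumption, by assumption⟩
            | exact h2 ⟨by assumption, by assumption⟩
            | omega)

lemma nG_mem_nSet (hq : 1 ≤ q) (hpq : q ≤ p) (z : Fin (p + q) → ℝ)
    (hz1 : vent z p = 0) (hz2 : vent z (p + 1) = 0) : nG p z ∈ nSet p q := by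
  refine ⟨nG_mem_soSet (by omega) z, ?_, ?_, ?_, ?_, ?_⟩
  · intro i j hi1 hi2 hj1 hj2
    rw [ent_nG z i j (by omega) (by omega) (by omega) (by omega)]
    split_ifs <;> first | ring1 | (exfalso; omega)
  · intro l hl1 hl2
    rcases eq_or_ne l 1 with rfl | hl
    · rw [show p - 1 + 1 = p from by omega]
      rw [ent_nG z p (p + 1) (by omega) (by omega) (by omega) (by omega), hz1, hz2]
      split_ifs <;> ring1
    · rw [ent_nG z (p - l + 1) (p + l) (by omega) (by omega) (by omega) (by omega)]
      split_ifs <;> first | ring1 | (exfalso; omega)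
  · intro k l hk1 hk2 hl1 hl2
    rw [ent_nG z k (p - l + 1) (by omega) (by omega) (by omega) (by omega),
      ent_nG z k (p + l) (by omega) (by omega) (by omega) (by omega)]
    split_ifs <;> first | ring1 | (exfalso; omega)
  · intro i j hi1 hij hj2
    rw [ent_nG z (p + 1 - j) (p + 1 - i) (by omega) (by omega) (by omega) (by omega),
      ent_nG z (p + 1 - j) (p + i) (by omega) (by omega) (by omega) (by omega)]
    split_ifs <;> first | ring1 | (exfalso; omega)
  · intro i j hi1 hij hj2
    rw [ent_nG z (p + i) (p + j) (by omega) (by omega) (by omega) (by omega),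
      ent_nG z (p + 1 - i) (p + j) (by omega) (by omega) (by omega) (by omega)]
    split_ifs <;> first | ring1 | (exfalso; omega)

end ANaux
end ANaux3
noncomputable section ANaux4
namespace ANaux
open Matrix

variable {p q : ℕ}

lemma Jmat_sq : Jmat p q * Jmat p q = 1 := by
  unfold Jmat
  rw [Matrix.diagonal_mul_diagonal]
  rw [show (fun i : Fin (p+q) => (if (i:ℕ) < p then (1:ℝ) else -1) *
      (if (i:ℕ) < p then (1:ℝ) else -1)) = fun _ => 1 from by
    funext i; by_cases h : (i : ℕ) < p <;> simp [h]]
  exact Matrix.diagonal_one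

/-- the unit given by `J`. -/
def Junit (p q : ℕ) : (Matrix (Fin (p + q)) (Fin (p + q)) ℝ)ˣ :=
  ⟨Jmat p q, Jmat p q, Jmat_sq, Jmat_sq⟩

lemma exp_orth {X : Matrix (Fin (p + q)) (Fin (p + q)) ℝ} (hX : X ∈ soSet p q) :
    (NormedSpace.exp X)ᵀ * Jmat p q * NormedSpace.exp X = Jmat p q := by
  have hX' : Xᵀ * Jmat p q = - (Jmat p q * X) := by
    have h0 : Xᵀ * Jmat p q + Jmat p q * X = 0 := hX
    linear_combination (norm := abel) h0
  have hXt : Xᵀ = Jmat p q * (-X) * Jmat p q := by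
    calc Xᵀ = Xᵀ * (Jmat p q * Jmat p q) := by rw [Jmat_sq, Matrix.mul_one]
      _ = (Xᵀ * Jmat p q) * Jmat p q := by rw [Matrix.mul_assoc]
      _ = (-(Jmat p q * X)) * Jmat p q := by rw [hX']
      _ = Jmat p q * (-X) * Jmat p q := by
          rw [Matrix.mul_neg, Matrix.neg_mul]
  have hexpT : NormedSpace.exp (Xᵀ) =
      Jmat p q * NormedSpace.exp (-X) * Jmat p q := by
    rw [hXt]
    exact Matrix.exp_units_conj (Junit p q) (-X)
  rw [← Matrix.exp_transpose, hexpT]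
  have hinv : NormedSpace.exp (-X) * NormedSpace.exp X = 1 := (expUnit X).inv_val
  calc Jmat p q * NormedSpace.exp (-X) * Jmat p q * Jmat p q * NormedSpace.exp X
      = Jmat p q * NormedSpace.exp (-X) * (Jmat p q * Jmat p q) * NormedSpace.exp X := by
        simp only [Matrix.mul_assoc]
    _ = Jmat p q * (NormedSpace.exp (-X) * NormedSpace.exp X) := by
        rw [Jmat_sq, Matrix.mul_one, Matrix.mul_assoc]
    _ = Jmat p q := by rw [hinv, Matrix.mul_one]

/-- the positivity/orthogonality subgroup. -/
def Hgrp (p q : ℕ) : Subgroup (Matrix (Fin (p + q)) (Fin (p + q)) ℝ)ˣ where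
  carrier := {g | (g : Matrix (Fin (p+q)) (Fin (p+q)) ℝ)ᵀ * Jmat p q *
      (g : Matrix (Fin (p+q)) (Fin (p+q)) ℝ) = Jmat p q ∧
    ∃ c : ℝ, 0 < c ∧ (g : Matrix (Fin (p+q)) (Fin (p+q)) ℝ)ᵀ *ᵥ fv p = c • fv p}
  one_mem' := by
    refine ⟨by simp, 1, one_pos, by simp⟩
  mul_mem' := by
    rintro a b ⟨ha1, ca, hca, ha2⟩ ⟨hb1, cb, hcb, hb2⟩
    have hab : ((a * b : _ˣ) : Matrix (Fin (p+q)) (Fin (p+q)) ℝ)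
        = (a : Matrix (Fin (p+q)) (Fin (p+q)) ℝ) * (b : Matrix (Fin (p+q)) (Fin (p+q)) ℝ) :=
      Units.val_mul a b
    refine ⟨?_, ca * cb, mul_pos hca hcb, ?_⟩
    · rw [hab, Matrix.transpose_mul]
      calc (b : Matrix (Fin (p+q)) (Fin (p+q)) ℝ)ᵀ * (a : Matrix (Fin (p+q)) (Fin (p+q)) ℝ)ᵀ *
            Jmat p q * ((a : Matrix (Fin (p+q)) (Fin (p+q)) ℝ) *
              (b : Matrix (Fin (p+q)) (Fin (p+q)) ℝ))
          = (b : Matrix (Fin (p+q)) (Fin (p+q)) ℝ)ᵀ *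
              ((a : Matrix (Fin (p+q)) (Fin (p+q)) ℝ)ᵀ * Jmat p q *
                (a : Matrix (Fin (p+q)) (Fin (p+q)) ℝ)) *
              (b : Matrix (Fin (p+q)) (Fin (p+q)) ℝ) := by
            simp only [Matrix.mul_assoc]
        _ = Jmat p q := by rw [ha1, hb1]
    · rw [hab, Matrix.transpose_mul, ← Matrix.mulVec_mulVec, ha2,
        Matrix.mulVec_smul, hb2, smul_smul, mul_comm]
  inv_mem' := by
    rintro g ⟨h1, c, hc, h2⟩
    have hid : ((g⁻¹ : _ˣ) : Matrix (Fin (p+q)) (Fin (p+q)) ℝ)ᵀ *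
        (g : Matrix (Fin (p+q)) (Fin (p+q)) ℝ)ᵀ = 1 := by
      rw [← Matrix.transpose_mul, ← Units.val_mul]
      simp
    have hgg : (g : Matrix (Fin (p+q)) (Fin (p+q)) ℝ) *
        ((g⁻¹ : _ˣ) : Matrix (Fin (p+q)) (Fin (p+q)) ℝ) = 1 := by
      rw [← Units.val_mul]
      simp
    constructor
    · calc ((g⁻¹ : _ˣ) : Matrix (Fin (p+q)) (Fin (p+q)) ℝ)ᵀ * Jmat p q *
            ((g⁻¹ : _ˣ) : Matrix (Fin (p+q)) (Fin (p+q)) ℝ)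
          = ((g⁻¹ : _ˣ) : Matrix (Fin (p+q)) (Fin (p+q)) ℝ)ᵀ *
              ((g : Matrix (Fin (p+q)) (Fin (p+q)) ℝ)ᵀ * Jmat p q *
                (g : Matrix (Fin (p+q)) (Fin (p+q)) ℝ)) *
              ((g⁻¹ : _ˣ) : Matrix (Fin (p+q)) (Fin (p+q)) ℝ) := by rw [h1]
        _ = (((g⁻¹ : _ˣ) : Matrix (Fin (p+q)) (Fin (p+q)) ℝ)ᵀ *
              (g : Matrix (Fin (p+q)) (Fin (p+q)) ℝ)ᵀ) * Jmat p q *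
              ((g : Matrix (Fin (p+q)) (Fin (p+q)) ℝ) *
                ((g⁻¹ : _ˣ) : Matrix (Fin (p+q)) (Fin (p+q)) ℝ)) := by
            simp only [Matrix.mul_assoc]
        _ = Jmat p q := by rw [hid, hgg, Matrix.one_mul, Matrix.mul_one]
    · refine ⟨c⁻¹, by positivity, ?_⟩
      have hkey : ((g⁻¹ : _ˣ) : Matrix (Fin (p+q)) (Fin (p+q)) ℝ)ᵀ *ᵥ
          ((g : Matrix (Fin (p+q)) (Fin (p+q)) ℝ)ᵀ *ᵥ fv p) = fv p := by
        rw [Matrix.mulVec_mulVec, hid, Matrix.one_mulVec]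
      rw [h2, Matrix.mulVec_smul] at hkey
      have h3 : (c⁻¹ * c) • (((g⁻¹ : _ˣ) : Matrix (Fin (p+q)) (Fin (p+q)) ℝ)ᵀ *ᵥ fv p)
          = c⁻¹ • fv p := by
        rw [mul_smul, hkey]
      rwa [inv_mul_cancel₀ (ne_of_gt hc), one_smul] at h3

lemma expUnit_val {n : ℕ} (X : Matrix (Fin n) (Fin n) ℝ) :
    (expUnit X : Matrix (Fin n) (Fin n) ℝ) = NormedSpace.exp X := rfl

end ANaux
end ANaux4
noncomputable section ANaux5
namespace ANaux
open Matrix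

variable {p q : ℕ}

lemma transpose_mulVec_fv (hp : 1 ≤ p) (hq : 1 ≤ q)
    (X : Matrix (Fin (p + q)) (Fin (p + q)) ℝ) (i : Fin (p + q)) :
    (Xᵀ *ᵥ fv p) i = ent X p ((i : ℕ) + 1) + ent X (p + 1) ((i : ℕ) + 1) := by
  have h0 : (Xᵀ *ᵥ fv p) i = ∑ j : Fin (p + q), X j i * fv p j := by
    simp [Matrix.mulVec, dotProduct, Matrix.transpose_apply]
  rw [h0, sum_mul_fv hp (by omega) (fun j => X j i)]
  rw [ent_fin X (⟨p - 1, by omega⟩ : Fin (p + q)) i, ent_fin X (⟨p, by omega⟩ : Fin (p + q)) i]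
  congr 2 <;> · simp; omega

lemma aSet_eigen (hq : 1 ≤ q) (hpq : q ≤ p) {X : Matrix (Fin (p + q)) (Fin (p + q)) ℝ}
    (hX : X ∈ aSet p q) :
    Xᵀ *ᵥ fv p = (ent X p (p + 1)) • fv p := by
  obtain ⟨hsym, hvan⟩ := hX
  have hc : ent X (p + 1) p = ent X p (p + 1) := by
    have h := hsym 1 le_rfl hq
    rw [show p - 1 + 1 = p from by omega] at h
    exact h.symm
  have hp : 1 ≤ p := le_trans hq hpq
  funext i
  rw [transpose_mulVec_fv hp hq]
  show _ = ent X p (p + 1) * fv p i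
  unfold fv
  rcases eq_or_ne ((i : ℕ) + 1) p with h1 | h1
  · rw [h1]
    have hv : ent X p p = 0 := by
      refine hvan p p (by omega) (by omega) (by omega) (by omega) ?_
      rintro ⟨l, hl1, hl2, ⟨e1, e2⟩ | ⟨e1, e2⟩⟩ <;> omega
    rw [hv, hc, if_pos rfl, if_neg (by omega)]
    ring
  · rcases eq_or_ne ((i : ℕ)) p with h2 | h2
    · have hv : ent X (p + 1) (p + 1) = 0 := by
        refine hvan (p + 1) (p + 1) (by omega) (by omega) (by omega) (by omega) ?_
        rintro ⟨l, hl1, hl2, ⟨e1, e2⟩ | ⟨e1, e2⟩⟩ <;> omega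
      rw [h2, hv, if_neg (show ¬(p + 1 = p) from by omega), if_pos rfl]
      ring
    · have hv1 : ent X p ((i : ℕ) + 1) = 0 := by
        refine hvan p ((i : ℕ) + 1) (by omega) (by omega) (by omega) (by omega) ?_
        rintro ⟨l, hl1, hl2, ⟨e1, e2⟩ | ⟨e1, e2⟩⟩ <;> omega
      have hv2 : ent X (p + 1) ((i : ℕ) + 1) = 0 := by
        refine hvan (p + 1) ((i : ℕ) + 1) (by omega) (by omega) (by omega) (by omega) ?_
        rintro ⟨l, hl1, hl2, ⟨e1, e2⟩ | ⟨e1, e2⟩⟩ <;> omega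
      rw [hv1, hv2, if_neg h1, if_neg h2]
      ring

lemma nSet_eigen (hq : 1 ≤ q) (hpq : q ≤ p) {X : Matrix (Fin (p + q)) (Fin (p + q)) ℝ}
    (hX : X ∈ nSet p q) :
    Xᵀ *ᵥ fv p = (0 : ℝ) • fv p := by
  obtain ⟨hso, c1, c2, c3, c4, c5⟩ := hX
  have hz2 : ent X p (p + 1) = 0 := by
    have h := c2 1 le_rfl hq
    rwa [show p - 1 + 1 = p from by omega] at h
  funext i
  rw [transpose_mulVec_fv (by omega) hq, zero_smul]
  show ent X p ((i : ℕ) + 1) + ent X (p + 1) ((i : ℕ) + 1) = (0 : Fin (p+q) → ℝ) i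
  show ent X p ((i : ℕ) + 1) + ent X (p + 1) ((i : ℕ) + 1) = 0
  set I : ℕ := (i : ℕ) + 1 with hI
  have hI1 : 1 ≤ I := by omega
  have hIn : I ≤ p + q := by omega
  rcases Nat.lt_or_ge (p : ℕ) I with hcase | hcase
  · -- I > p : I = p + l
    set l : ℕ := I - p with hl
    have hIe : I = p + l := by omega
    rcases eq_or_ne l 1 with hl1 | hl1
    · have e1 : ent X (p + 1) (p + 1) = 0 := by
        have h := soSet_skew' hso (show p < p + 1 by omega) (by omega)
          (show p < p + 1 by omega) (by omega)
        linarith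
      rw [hIe, hl1, hz2, e1]
      ring
    · have h5 := c5 1 l le_rfl (by omega) (by omega)
      rw [show p + 1 - 1 = p from by omega] at h5
      rw [hIe]
      linarith
  · -- I ≤ p
    have ecross : ent X (p + 1) I = ent X I (p + 1) :=
      (soSet_cross hso hI1 hcase (by omega) (by omega)).symm
    rcases eq_or_ne I p with hIp | hIp
    · have e1 : ent X p p = 0 := by
        have h := soSet_skew hso (le_refl 1 |>.trans (by omega) : 1 ≤ p) le_rfl
          (show 1 ≤ p by omega) le_rfl
        linarith
      rw [hIp] at ecross ⊢
      rw [e1, ecross, hz2]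
      ring
    · have eskew : ent X p I = - ent X I p :=
        soSet_skew hso (show 1 ≤ p by omega) le_rfl hI1 hcase
      have emid : ent X I p = ent X I (p + 1) := by
        rcases Nat.lt_or_ge (p - q) I with hin | hin
        · -- p - q < I < p : use c4 with i = 1, j = p + 1 - I
          have h4 := c4 1 (p + 1 - I) le_rfl (by omega) (by omega)
          rw [show p + 1 - (p + 1 - I) = I from by omega,
            show p + 1 - 1 = p from by omega] at h4
          exact h4
        · -- I ≤ p - q : use c3
          have h3 := c3 I 1 hI1 hin le_rfl hq
          rwa [show p - 1 + 1 = p from by omega] at h3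
      linarith

lemma aSet_mem_soSet (hq : 1 ≤ q) (hpq : q ≤ p) {X : Matrix (Fin (p + q)) (Fin (p + q)) ℝ}
    (hX : X ∈ aSet p q) : X ∈ soSet p q := by
  obtain ⟨hsym, hvan⟩ := hX
  show Xᵀ * Jmat p q + Jmat p q * X = 0
  ext i j
  simp only [Matrix.add_apply, Matrix.mul_diagonal, Matrix.diagonal_mul, Jmat,
    Matrix.transpose_apply, Matrix.zero_apply]
  by_cases hsp : ∃ l, 1 ≤ l ∧ l ≤ q ∧
      (((i : ℕ) + 1 = p - l + 1 ∧ (j : ℕ) + 1 = p + l) ∨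
        ((i : ℕ) + 1 = p + l ∧ (j : ℕ) + 1 = p - l + 1))
  · obtain ⟨l, hl1, hl2, hcase⟩ := hsp
    have hs := hsym l hl1 hl2
    rcases hcase with ⟨e1, e2⟩ | ⟨e1, e2⟩
    · have hdi : (if (i : ℕ) < p then (1:ℝ) else -1) = 1 := if_pos (by omega)
      have hdj : (if (j : ℕ) < p then (1:ℝ) else -1) = -1 := if_neg (by omega)
      rw [hdi, hdj, ent_fin X j i, ent_fin X i j, e1, e2]
      rw [← hs]
      ring
    · have hdi : (if (i : ℕ) < p then (1:ℝ) else -1) = -1 := if_neg (by omega)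
      have hdj : (if (j : ℕ) < p then (1:ℝ) else -1) = 1 := if_pos (by omega)
      rw [hdi, hdj, ent_fin X j i, ent_fin X i j, e1, e2]
      rw [hs]
      ring
  · have hv1 := hvan ((i : ℕ) + 1) ((j : ℕ) + 1) (by omega) (by omega) (by omega) (by omega) hsp
    have hv2 := hvan ((j : ℕ) + 1) ((i : ℕ) + 1) (by omega) (by omega) (by omega) (by omega)
      (fun ⟨l, a, b, h⟩ => hsp ⟨l, a, b,
        h.elim (fun hh => Or.inr ⟨hh.2, hh.1⟩) (fun hh => Or.inl ⟨hh.2, hh.1⟩)⟩)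
    rw [ent_fin X j i, ent_fin X i j, hv1, hv2]
    ring

lemma ANgrp_le_Hgrp (hq : 1 ≤ q) (hpq : q ≤ p) : ANgrp p q ≤ Hgrp p q := by
  rw [ANgrp, Subgroup.closure_le]
  rintro g ⟨X, hX, rfl⟩
  have hso : X ∈ soSet p q := by
    rcases hX with h | h
    · exact aSet_mem_soSet hq hpq h
    · exact h.1
  refine ⟨?_, ?_⟩
  · rw [expUnit_val]
    exact exp_orth hso
  · rcases hX with h | h
    · refine ⟨Real.exp (ent X p (p + 1)), Real.exp_pos _, ?_⟩
      rw [expUnit_val, ← Matrix.exp_transpose]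
      exact exp_mulVec_eigen _ _ _ (by rw [aSet_eigen hq hpq h])
    · refine ⟨1, one_pos, ?_⟩
      rw [expUnit_val, ← Matrix.exp_transpose]
      have h0 := exp_mulVec_eigen (Xᵀ) (fv p) 0
        (by rw [nSet_eigen hq hpq h])
      simpa using h0

end ANaux
end ANaux5
noncomputable section ANaux6
namespace ANaux
open Matrix

variable {p q : ℕ}

/-! ### bilinearity of ip -/

lemma ip_comm (x y : Fin (p + q) → ℝ) : ip p q x y = ip p q y x := by
  unfold ip; congr 1; funext i; ring

lemma ip_sub_right (x y w : Fin (p + q) → ℝ) :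
    ip p q x (y - w) = ip p q x y - ip p q x w := by
  unfold ip; rw [← Finset.sum_sub_distrib]; congr 1; funext i
  simp only [Pi.sub_apply]; ring

lemma ip_sub_left (x y w : Fin (p + q) → ℝ) :
    ip p q (y - w) x = ip p q y x - ip p q w x := by
  rw [ip_comm, ip_sub_right, ip_comm x y, ip_comm x w]

lemma ip_smul_right (c : ℝ) (x y : Fin (p + q) → ℝ) :
    ip p q x (c • y) = c * ip p q x y := by
  unfold ip; rw [Finset.mul_sum]; congr 1; funext i
  simp only [Pi.smul_apply, smul_eq_mul]; ring

lemma ip_smul_left (c : ℝ) (x y : Fin (p + q) → ℝ) :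
    ip p q (c • x) y = c * ip p q x y := by
  rw [ip_comm, ip_smul_right, ip_comm]

/-! ### values -/

lemma ip_ePv_right (hq : 1 ≤ q) (hpq : q ≤ p) (x : Fin (p + q) → ℝ) :
    ip p q x (ePv p) = x ⟨p - 1, by omega⟩ := by
  unfold ip ePv
  rw [show (fun i : Fin (p+q) => (if (i:ℕ) < p then (1:ℝ) else -1) * x i *
      (if (i:ℕ) + 1 = p then (1:ℝ) else 0))
      = fun i : Fin (p+q) => if (i:ℕ) + 1 = p then x i else 0 from by
    funext i
    rcases eq_or_ne ((i:ℕ) + 1) p with h | h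
    · rw [if_pos h, if_pos h, if_pos (by omega)]; ring
    · rw [if_neg h, if_neg h]; ring]
  exact sum_ite_val' (by omega) (by omega) x

lemma ip_ePv'_right (hq : 1 ≤ q) (hpq : q ≤ p) (x : Fin (p + q) → ℝ) :
    ip p q x (ePv' p) = - x ⟨p, by omega⟩ := by
  unfold ip ePv'
  rw [show (fun i : Fin (p+q) => (if (i:ℕ) < p then (1:ℝ) else -1) * x i *
      (if (i:ℕ) = p then (1:ℝ) else 0))
      = fun i : Fin (p+q) => if (i:ℕ) = p then - x i else 0 from by
    funext i
    rcases eq_or_ne ((i:ℕ)) p with h | h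
    · rw [if_pos h, if_pos h, if_neg (by omega)]; ring
    · rw [if_neg h, if_neg h]; ring]
  rw [sum_ite_val (by omega) (fun i => - x i)]

lemma fv_eq : (fv p : Fin (p + q) → ℝ) = ePv p + ePv' p := rfl
lemma wv_eq : (wv p : Fin (p + q) → ℝ) = ePv p - ePv' p := rfl

/-! ### mulVec of the generators -/

lemma nG_mulVec (z y : Fin (p + q) → ℝ) :
    nG p z *ᵥ y = (fv p ⬝ᵥ y) • z - (ip p q z y) • wv p := by
  funext i
  show ∑ j : Fin (p + q), nG p z i j * y j = _
  unfold nG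
  rw [show (fun j : Fin (p+q) => (z i * fv p j - wv p i * (dv p j * z j)) * y j)
      = fun j : Fin (p+q) => z i * (fv p j * y j) - wv p i * (dv p j * z j * y j) from by
    funext j; ring]
  rw [Finset.sum_sub_distrib, ← Finset.mul_sum, ← Finset.mul_sum]
  have h1 : ∑ j : Fin (p+q), fv p j * y j = fv p ⬝ᵥ y := rfl
  have h2 : ∑ j : Fin (p+q), dv p j * z j * y j = ip p q z y := rfl
  rw [h1, h2]
  simp only [Pi.sub_apply, Pi.smul_apply, smul_eq_mul]
  ring

lemma aG_mulVec (hq : 1 ≤ q) (hpq : q ≤ p) (t : ℝ) (y : Fin (p + q) → ℝ) :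
    aG p (n := p + q) t *ᵥ y = fun i : Fin (p + q) =>
      (if (i : ℕ) + 1 = p then t * y ⟨p, by omega⟩ else 0) +
      (if (i : ℕ) = p then t * y ⟨p - 1, by omega⟩ else 0) := by
  funext i
  show ∑ j : Fin (p + q), aG p t i j * y j = _
  unfold aG
  rw [show (fun j : Fin (p+q) =>
        ((if (i:ℕ) + 1 = p then (1:ℝ) else 0) * (if (j:ℕ) = p then t else 0) +
          (if (i:ℕ) = p then (1:ℝ) else 0) * (if (j:ℕ) + 1 = p then t else 0)) * y j)
      = fun j : Fin (p+q) =>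
        (if (i:ℕ) + 1 = p then (1:ℝ) else 0) * ((if (j:ℕ) = p then t * y j else 0)) +
        (if (i:ℕ) = p then (1:ℝ) else 0) * ((if (j:ℕ) + 1 = p then t * y j else 0)) from by
    funext j; split_ifs <;> ring]
  rw [Finset.sum_add_distrib, ← Finset.mul_sum, ← Finset.mul_sum,
    sum_ite_val (show p < p + q by omega) (fun j => t * y j),
    sum_ite_val' (show 1 ≤ p by omega) (show p - 1 < p + q by omega) (fun j => t * y j)]
  split_ifs <;> ring

lemma aG_fv (hq : 1 ≤ q) (hpq : q ≤ p) (t : ℝ) :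
    aG p (n := p + q) t *ᵥ fv p = t • fv p := by
  rw [aG_mulVec hq hpq]
  funext i
  simp only [Pi.smul_apply, smul_eq_mul]
  unfold fv
  rw [if_neg (show ¬((p : ℕ) + 1 = p) from by omega), if_pos rfl,
    if_pos (show (p - 1 : ℕ) + 1 = p from by omega), if_neg (show ¬((p - 1 : ℕ) = p) from by omega)]
  split_ifs <;> ring

lemma aG_wv (hq : 1 ≤ q) (hpq : q ≤ p) (t : ℝ) :
    aG p (n := p + q) t *ᵥ wv p = (-t) • wv p := by
  rw [aG_mulVec hq hpq]
  funext i
  simp only [Pi.smul_apply, smul_eq_mul]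
  unfold wv
  rw [if_neg (show ¬((p : ℕ) + 1 = p) from by omega), if_pos rfl,
    if_pos (show (p - 1 : ℕ) + 1 = p from by omega), if_neg (show ¬((p - 1 : ℕ) = p) from by omega)]
  split_ifs <;> ring

lemma aG_z (hq : 1 ≤ q) (hpq : q ≤ p) (t : ℝ) (z : Fin (p + q) → ℝ)
    (hz1 : z ⟨p - 1, by omega⟩ = 0) (hz2 : z ⟨p, by omega⟩ = 0) :
    aG p (n := p + q) t *ᵥ z = (0 : ℝ) • z := by
  rw [aG_mulVec hq hpq]
  funext i
  simp only [Pi.smul_apply, smul_eq_mul, zero_mul, hz1, hz2]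
  split_ifs <;> ring

end ANaux
end ANaux6
noncomputable section ANaux7
namespace ANaux
open Matrix
set_option maxHeartbeats 2000000

variable {p q : ℕ}

lemma Jmat_transpose : (Jmat p q)ᵀ = Jmat p q := Matrix.diagonal_transpose _

lemma ip_dot' (x y : Fin (p + q) → ℝ) :
    ip p q x y = (Jmat p q *ᵥ x) ⬝ᵥ y := by
  unfold ip Jmat dotProduct
  refine Finset.sum_congr rfl fun i _ => ?_
  rw [Matrix.mulVec_diagonal]

lemma ip_orth_inv {A : Matrix (Fin (p + q)) (Fin (p + q)) ℝ}
    (hA : Aᵀ * Jmat p q * A = Jmat p q) (x y : Fin (p + q) → ℝ) :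
    ip p q (A *ᵥ x) (A *ᵥ y) = ip p q x y := by
  rw [ip_dot, ip_dot, Matrix.mulVec_mulVec, Matrix.dotProduct_mulVec,
    ← Matrix.vecMul_transpose, Matrix.vecMul_vecMul, ← Matrix.mul_assoc, hA]
  have hl : x ᵥ* Jmat p q = Jmat p q *ᵥ x := by
    rw [← Matrix.mulVec_transpose, Jmat_transpose]
  rw [hl]
  try rw [← ip_dot']
  try rw [← ip_dot]

lemma dot_orth_pos {g : (Matrix (Fin (p+q)) (Fin (p+q)) ℝ)ˣ} {c : ℝ}
    (hc : 0 < c) (h2 : (g : Matrix (Fin (p+q)) (Fin (p+q)) ℝ)ᵀ *ᵥ fv p = c • fv p)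
    (x : Fin (p + q) → ℝ) (hx : 0 < fv p ⬝ᵥ x) :
    0 < fv p ⬝ᵥ ((g : Matrix (Fin (p+q)) (Fin (p+q)) ℝ) *ᵥ x) := by
  rw [Matrix.dotProduct_mulVec, ← Matrix.mulVec_transpose, h2, smul_dotProduct]
  exact mul_pos hc hx

/-! ### the chain for `nG` -/

lemma reach (hq : 1 ≤ q) (hpq : q ≤ p) (r : ℝ) (hr : 0 < r) (u : Fin (p + q) → ℝ)
    (hu0 : ip p q u u = r ^ 2) (hu1 : 0 < vent u p + vent u (p + 1)) :
    ∃ g ∈ ANgrp p q, (g : Matrix (Fin (p+q)) (Fin (p+q)) ℝ) *ᵥ (r • ePv p) = u := by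
  have hp : 1 ≤ p := le_trans hq hpq
  set P : Fin (p + q) := ⟨p - 1, by omega⟩ with hP
  set P' : Fin (p + q) := ⟨p, by omega⟩ with hP'
  set α : ℝ := u P with hα
  set β : ℝ := u P' with hβ
  have hvent : vent u p + vent u (p + 1) = α + β := by
    unfold vent
    rw [dif_pos (show p - 1 < p + q by omega), dif_pos (show p + 1 - 1 < p + q by omega)]
    rfl
  set s : ℝ := α + β with hs
  have hs0 : 0 < s := by rw [← hvent]; exact hu1
  set z : Fin (p + q) → ℝ := r⁻¹ • (u - α • ePv p - β • ePv' p) with hz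
  have hePvP : ePv p P = 1 := by
    show (if (p - 1 : ℕ) + 1 = p then (1:ℝ) else 0) = 1
    rw [if_pos (by omega)]
  have hePvP' : ePv p P' = 0 := by
    show (if (p : ℕ) + 1 = p then (1:ℝ) else 0) = 0
    rw [if_neg (by omega)]
  have hePv'P : ePv' p P = 0 := by
    show (if (p - 1 : ℕ) = p then (1:ℝ) else 0) = 0
    rw [if_neg (by omega)]
  have hePv'P' : ePv' p P' = 1 := by
    show (if (p : ℕ) = p then (1:ℝ) else 0) = 1
    rw [if_pos rfl]
  have hzP : z P = 0 := by
    rw [hz]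
    simp only [Pi.smul_apply, Pi.sub_apply, smul_eq_mul, hePvP, hePv'P]
    rw [← hα]; ring
  have hzP' : z P' = 0 := by
    rw [hz]
    simp only [Pi.smul_apply, Pi.sub_apply, smul_eq_mul, hePvP', hePv'P']
    rw [← hβ]; ring
  set c : ℝ := ip p q z z with hc
  -- key scalar identity
  have hee : ip p q (ePv p) (ePv p : Fin (p+q) → ℝ) = 1 := by
    rw [ip_ePv_right hq hpq, hePvP]
  have he'e' : ip p q (ePv' p) (ePv' p : Fin (p+q) → ℝ) = -1 := by
    rw [ip_ePv'_right hq hpq, hePv'P']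
  have hee' : ip p q (ePv p) (ePv' p : Fin (p+q) → ℝ) = 0 := by
    rw [ip_ePv'_right hq hpq, hePvP']; ring
  have he'e : ip p q (ePv' p) (ePv p : Fin (p+q) → ℝ) = 0 := by
    rw [ip_ePv_right hq hpq, hePv'P]
  have hue : ip p q u (ePv p) = α := by rw [ip_ePv_right hq hpq, hα]
  have hue' : ip p q u (ePv' p) = -β := by rw [ip_ePv'_right hq hpq, hβ]
  have heu : ip p q (ePv p) u = α := by rw [ip_comm]; exact hue
  have he'u : ip p q (ePv' p) u = -β := by rw [ip_comm]; exact hue'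
  have hcval : r ^ 2 * c = r ^ 2 - α ^ 2 + β ^ 2 := by
    have hexp : ip p q (u - α • ePv p - β • ePv' p) (u - α • ePv p - β • ePv' p)
        = r ^ 2 - α ^ 2 + β ^ 2 := by
      simp only [ip_sub_left, ip_sub_right, ip_smul_left, ip_smul_right]
      rw [hu0, hue, hue', heu, he'u, hee, he'e', hee', he'e]
      ring
    have : c = r⁻¹ * (r⁻¹ * (r ^ 2 - α ^ 2 + β ^ 2)) := by
      rw [hc, hz, ip_smul_left, ip_smul_right, hexp]
    rw [this]
    field_simp
  have hkey : r * (r - r * c) = s * (α - β) := by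
    have h2 : s * (α - β) = α ^ 2 - β ^ 2 := by rw [hs]; ring
    have h3 : r * (r - r * c) = r ^ 2 - r ^ 2 * c := by ring
    rw [h3, hcval, h2]; ring
  set t : ℝ := Real.log (s / r) with ht
  have het : Real.exp t = s / r := Real.exp_log (by positivity)
  have het' : Real.exp (-t) = r / s := by
    rw [Real.exp_neg, het]
    rw [inv_div]
  -- the group element
  have hvz1 : vent z p = 0 := by
    unfold vent
    rw [dif_pos (show p - 1 < p + q by omega)]
    exact hzP
  have hvz2 : vent z (p + 1) = 0 := by
    unfold vent
    rw [dif_pos (show p + 1 - 1 < p + q by omega)]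
    exact hzP'
  have hmemA : expUnit (aG p (n := p+q) t) ∈ ANgrp p q :=
    Subgroup.subset_closure ⟨aG p t, Set.mem_union_left _ (aG_mem_aSet hq hpq t), rfl⟩
  have hmemN : expUnit (nG p z) ∈ ANgrp p q :=
    Subgroup.subset_closure ⟨nG p z, Set.mem_union_right _ (nG_mem_nSet hq hpq z hvz1 hvz2), rfl⟩
  refine ⟨expUnit (aG p t) * expUnit (nG p z), mul_mem hmemA hmemN, ?_⟩
  -- computation of the action
  have hfv_y0 : fv p ⬝ᵥ (r • ePv p : Fin (p+q) → ℝ) = r := by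
    rw [fv_dot hp (by omega)]
    simp only [Pi.smul_apply, smul_eq_mul]
    rw [show ((⟨p - 1, by omega⟩ : Fin (p+q))) = P from rfl,
      show ((⟨p, by omega⟩ : Fin (p+q))) = P' from rfl, hePvP, hePvP']
    ring
  have hip_z_y0 : ip p q z (r • ePv p : Fin (p+q) → ℝ) = 0 := by
    rw [ip_smul_right, ip_ePv_right hq hpq]
    rw [show ((⟨p - 1, by omega⟩ : Fin (p+q))) = P from rfl, hzP]
    ring
  have h1 : nG p z *ᵥ (r • ePv p) = r • z := by
    rw [nG_mulVec, hfv_y0, hip_z_y0, zero_smul, sub_zero]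
  have hfv_z : fv p ⬝ᵥ z = 0 := by
    rw [fv_dot hp (by omega)]
    rw [show ((⟨p - 1, by omega⟩ : Fin (p+q))) = P from rfl,
      show ((⟨p, by omega⟩ : Fin (p+q))) = P' from rfl, hzP, hzP']
    ring
  have h2 : nG p z *ᵥ (r • z) = (-(r * c)) • wv p := by
    rw [Matrix.mulVec_smul, nG_mulVec, hfv_z, ← hc, zero_smul, zero_sub, smul_neg, smul_smul]
    rw [← neg_smul]
  have hfv_wv : fv p ⬝ᵥ (wv p : Fin (p+q) → ℝ) = 0 := by
    rw [fv_dot hp (by omega)]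
    unfold wv
    rw [if_pos (show (p - 1 : ℕ) + 1 = p from by omega), if_neg (show ¬((p-1 : ℕ) = p) from by omega),
      if_neg (show ¬((p : ℕ) + 1 = p) from by omega), if_pos rfl]
    ring
  have hip_z_wv : ip p q z (wv p) = 0 := by
    rw [wv_eq, show (ePv p - ePv' p : Fin (p+q) → ℝ) = ePv p - ePv' p from rfl]
    rw [ip_sub_right, ip_ePv_right hq hpq, ip_ePv'_right hq hpq]
    rw [show ((⟨p - 1, by omega⟩ : Fin (p+q))) = P from rfl,
      show ((⟨p, by omega⟩ : Fin (p+q))) = P' from rfl, hzP, hzP']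
    ring
  have h3 : nG p z *ᵥ ((-(r * c)) • wv p) = 0 := by
    rw [Matrix.mulVec_smul, nG_mulVec, hfv_wv, hip_z_wv, zero_smul, zero_smul, sub_zero,
      smul_zero]
  have hexp_n : NormedSpace.exp (nG p z) *ᵥ (r • ePv p)
      = (r • ePv p) + r • z + (2⁻¹ : ℝ) • ((-(r * c)) • wv p) :=
    exp_mulVec_seq _ _ _ _ h1 h2 h3
  have hdec : (r • ePv p) + r • z + (2⁻¹ : ℝ) • ((-(r * c)) • wv p)
      = (r / 2) • fv p + ((r - r * c) / 2) • wv p + r • z := by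
    funext i
    simp only [Pi.add_apply, Pi.smul_apply, smul_eq_mul]
    unfold ePv fv wv
    split_ifs <;> ring
  have hzP1 : z ⟨p - 1, by omega⟩ = 0 := hzP
  have hzP2 : z ⟨p, by omega⟩ = 0 := hzP'
  have hexp_a : ∀ (v : Fin (p+q) → ℝ) (cc : ℝ), aG p (n := p+q) t *ᵥ v = cc • v →
      NormedSpace.exp (aG p t) *ᵥ v = Real.exp cc • v := fun v cc hv =>
    exp_mulVec_eigen _ _ _ hv
  rw [Units.val_mul, expUnit_val, expUnit_val, ← Matrix.mulVec_mulVec, hexp_n, hdec]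
  rw [Matrix.mulVec_add, Matrix.mulVec_add, Matrix.mulVec_smul, Matrix.mulVec_smul,
    Matrix.mulVec_smul]
  rw [hexp_a (fv p) t (aG_fv hq hpq t), hexp_a (wv p) (-t) (aG_wv hq hpq t),
    hexp_a z 0 (aG_z hq hpq t z hzP1 hzP2), Real.exp_zero, one_smul, het, het']
  have hr' : r ≠ 0 := ne_of_gt hr
  have hs' : s ≠ 0 := ne_of_gt hs0
  have hE1 : (r / 2) • ((s / r) • (fv p : Fin (p+q) → ℝ)) = (s / 2) • (fv p : Fin (p+q) → ℝ) := by
    rw [smul_smul]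
    congr 1
    field_simp
  have hE2 : ((r - r * c) / 2) • ((r / s) • (wv p : Fin (p+q) → ℝ))
      = ((α - β) / 2) • (wv p : Fin (p+q) → ℝ) := by
    rw [smul_smul]
    congr 1
    rw [div_mul_div_comm, show (r - r * c) * r = s * (α - β) from by linear_combination hkey]
    field_simp
  rw [hE1, hE2]
  -- final pointwise identity
  funext i
  simp only [Pi.add_apply, Pi.smul_apply, smul_eq_mul]
  unfold fv wv
  rcases eq_or_ne ((i : ℕ) + 1) p with hi1 | hi1
  · have hiP : i = P := by apply Fin.ext; simp [hP]; omega
    rw [if_pos hi1, if_neg (by omega), hiP, hzP, ← hα, hs]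
    ring
  · rcases eq_or_ne ((i : ℕ)) p with hi2 | hi2
    · have hiP : i = P' := by apply Fin.ext; simp [hP']; omega
      rw [if_neg hi1, if_pos hi2, hiP, hzP', ← hβ, hs]
      ring
    · rw [hz]
      simp only [Pi.smul_apply, Pi.sub_apply, smul_eq_mul]
      unfold ePv ePv'
      rw [if_neg hi1, if_neg hi2]
      field_simp
      ring

end ANaux
end ANaux7
/-- For `r > 0`, `S₊ := {v : ⟨v,v⟩ = r², v^p + v^{p+1} > 0}` is a single
`AN`-orbit: for every `x ∈ S₊`, `AN(x) = S₊`. -/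
theorem ANgrp_orbit_sphere (p q : ℕ) (hq : 1 ≤ q) (hpq : q ≤ p) (r : ℝ) (hr : 0 < r)
    (x : Fin (p + q) → ℝ)
    (hx0 : ip p q x x = r ^ 2) (hx1 : 0 < vent x p + vent x (p + 1)) :
    orb (ANgrp p q) x = {v | ip p q v v = r ^ 2 ∧ 0 < vent v p + vent v (p + 1)} := by
  have hp : 1 ≤ p := le_trans hq hpq
  ext v
  simp only [Set.mem_setOf_eq]
  constructor
  · rintro ⟨g, hg, rfl⟩
    obtain ⟨horth, cc, hcc, heig⟩ := ANaux.ANgrp_le_Hgrp hq hpq hg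
    constructor
    · rw [ANaux.ip_orth_inv horth, hx0]
    · rw [ANaux.vent_sum_eq hp hq]
      refine ANaux.dot_orth_pos hcc heig x ?_
      rw [← ANaux.vent_sum_eq hp hq]
      exact hx1
  · rintro ⟨hv0, hv1⟩
    obtain ⟨gx, hgx, hgx2⟩ := ANaux.reach hq hpq r hr x hx0 hx1
    obtain ⟨gv, hgv, hgv2⟩ := ANaux.reach hq hpq r hr v hv0 hv1
    refine ⟨gv * gx⁻¹, mul_mem hgv (inv_mem hgx), ?_⟩
    have hx0' : ((gx⁻¹ : (Matrix (Fin (p+q)) (Fin (p+q)) ℝ)ˣ) : Matrix (Fin (p+q)) (Fin (p+q)) ℝ)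
        *ᵥ x = r • ANaux.ePv p := by
      rw [← hgx2, Matrix.mulVec_mulVec, ← Units.val_mul]
      simp
    rw [Units.val_mul, ← Matrix.mulVec_mulVec, hx0', hgv2]
end
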